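/- arXiv:1908.11575 — 5 statements merged into one kernel-verified Lean document; each statement's English description precedes it below -/
import Mathlib

section
/- Let U ⊆ ℝᵈ be an open set definable by polynomials and let R₁,…,R_k ∈ ℝ[x₁,…,x_d]. Then the open set {x ∈ U : Rᵢ(x) ≠ 0 for i = 1,…,k} has only finitely many connected components. -/
open MvPolynomial Set Function Filter

theorem FMC.exists_eval_ne_zero_near :
    ∀ (n : ℕ) (p : MvPolynomial (Fin n) ℝ), p ≠ 0 → ∀ (x₀ : Fin n → ℝ) (ε : ℝ), 0 < ε →
      ∃ x : Fin n → ℝ, (∀ i, |x i - x₀ i| < ε) ∧ eval x p ≠ 0 := by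
  intro n
  induction n with
  | zero =>
    intro p hp x₀ ε hε
    refine ⟨x₀, fun i => by simpa using hε, ?_⟩
    intro h
    apply hp
    apply MvPolynomial.funext (q := 0)
    intro x
    rw [show x = x₀ from funext fun i => i.elim0]
    simpa using h
  | succ m ih =>
    intro p hp x₀ ε hε
    set q : Polynomial (MvPolynomial (Fin m) ℝ) := MvPolynomial.finSuccEquiv ℝ m p with hq
    have hq0 : q ≠ 0 := by
      simp only [hq]
      intro h
      apply hp
      have := congrArg (MvPolynomial.finSuccEquiv ℝ m).symm h
      simpa using this
    have hlc : q.leadingCoeff ≠ 0 := Polynomial.leadingCoeff_ne_zero.mpr hq0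
    obtain ⟨y, hy, hyc⟩ := ih q.leadingCoeff hlc (Fin.tail x₀) ε hε
    have hmap : (q.map (eval y)) ≠ 0 := by
      intro h
      apply hyc
      have h2 : (q.map (eval y)).coeff q.natDegree = 0 := by rw [h]; simp
      rw [Polynomial.coeff_map] at h2
      exact h2
    have hroots : {t : ℝ | (q.map (eval y)).IsRoot t}.Finite :=
      Polynomial.finite_setOf_isRoot hmap
    have hIoo : (Set.Ioo (x₀ 0 - ε) (x₀ 0 + ε)).Infinite :=
      Set.Ioo_infinite (by linarith)
    obtain ⟨t, ht⟩ := (hIoo.diff hroots).nonempty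
    refine ⟨Fin.cons t y, ?_, ?_⟩
    · intro i
      refine Fin.cases ?_ ?_ i
      · simp only [Fin.cons_zero]
        have h1 := ht.1.1; have h2 := ht.1.2
        rw [abs_lt]; constructor <;> linarith
      · intro j
        simpa [Fin.cons_succ, Fin.tail] using hy j
    · have := MvPolynomial.eval_eq_eval_mv_eval' y t p
      rw [this]
      exact fun h => ht.2 h

theorem FMC.eval_abs_le {d : ℕ} (f : MvPolynomial (Fin d) ℝ) :
    ∃ B : ℝ, 0 < B ∧ ∀ x : Fin d → ℝ, |eval x f| ≤ B * (1 + ‖x‖) ^ f.totalDegree := by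
  refine ⟨(∑ m ∈ f.support, |coeff m f|) + 1, by positivity, fun x => ?_⟩
  have hb : (1:ℝ) ≤ 1 + ‖x‖ := by
    have := norm_nonneg x; linarith
  rw [eval_eq]
  calc |∑ m ∈ f.support, coeff m f * ∏ i ∈ m.support, x i ^ m i|
      ≤ ∑ m ∈ f.support, |coeff m f * ∏ i ∈ m.support, x i ^ m i| :=
        Finset.abs_sum_le_sum_abs _ _
    _ ≤ ∑ m ∈ f.support, |coeff m f| * (1 + ‖x‖) ^ f.totalDegree := by
        apply Finset.sum_le_sum
        intro m hm
        rw [abs_mul]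
        apply mul_le_mul_of_nonneg_left _ (abs_nonneg _)
        calc |∏ i ∈ m.support, x i ^ m i|
            ≤ ∏ i ∈ m.support, (1 + ‖x‖) ^ m i := by
              rw [Finset.abs_prod]
              apply Finset.prod_le_prod (fun _ _ => abs_nonneg _)
              intro i _
              rw [abs_pow]
              apply pow_le_pow_left₀ (abs_nonneg _)
              calc |x i| ≤ ‖x‖ := by
                    simpa [Real.norm_eq_abs] using norm_le_pi_norm x i
                _ ≤ 1 + ‖x‖ := by linarith
          _ = (1 + ‖x‖) ^ (∑ i ∈ m.support, m i) := by
              rw [Finset.prod_pow_eq_pow_sum]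
          _ ≤ (1 + ‖x‖) ^ f.totalDegree := by
              apply pow_le_pow_right₀ hb
              have := MvPolynomial.le_totalDegree hm
              simpa [Finsupp.sum] using this
    _ = (∑ m ∈ f.support, |coeff m f|) * (1 + ‖x‖) ^ f.totalDegree := by
        rw [Finset.sum_mul]
    _ ≤ ((∑ m ∈ f.support, |coeff m f|) + 1) * (1 + ‖x‖) ^ f.totalDegree := by
        apply mul_le_mul_of_nonneg_right _ (by positivity)
        linarith

namespace FMC



/-- Any `d+2` polynomials in `d` variables admit a "cleared homogeneous" dependence:
nontrivial coefficients `c` with `∑ c_{α,k} (∏ φᵢ^{αᵢ}) f^{dM-|α|} (X j)^k = 0`. -/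
theorem exists_dependence {d : ℕ} (φ : Fin d → MvPolynomial (Fin d) ℝ)
    (f : MvPolynomial (Fin d) ℝ) (j : Fin d) :
    ∃ (M : ℕ) (c : ((Fin d → Fin (M + 1)) × Fin (M + 1)) → ℝ),
      (∃ ik, c ik ≠ 0) ∧
      (∑ ik : ((Fin d → Fin (M + 1)) × Fin (M + 1)),
        c ik • ((∏ i, φ i ^ (ik.1 i : ℕ)) * f ^ (d * M - ∑ i, (ik.1 i : ℕ))
          * (X j : MvPolynomial (Fin d) ℝ) ^ (ik.2 : ℕ))) = 0 := by
  classical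
  set D₁ : ℕ := (f.totalDegree + 1) + Finset.univ.sup (fun i => (φ i).totalDegree) with hD₁
  have hφdeg : ∀ i, (φ i).totalDegree ≤ D₁ := by
    intro i
    have : (φ i).totalDegree ≤ Finset.univ.sup (fun i => (φ i).totalDegree) :=
      Finset.le_sup (f := fun i => (φ i).totalDegree) (Finset.mem_univ i)
    omega
  have hfdeg : f.totalDegree ≤ D₁ := by omega
  have hD₁1 : 1 ≤ D₁ := by omega
  set M : ℕ := (D₁ * d + 2) ^ d with hM
  have hM1 : 1 ≤ M := Nat.one_le_pow _ _ (by omega)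
  set E : ℕ := D₁ * d * M + M with hE
  refine ⟨M, ?_⟩
  set w : ((Fin d → Fin (M + 1)) × Fin (M + 1)) → MvPolynomial (Fin d) ℝ :=
    fun ik => (∏ i, φ i ^ (ik.1 i : ℕ)) * f ^ (d * M - ∑ i, (ik.1 i : ℕ))
          * (X j : MvPolynomial (Fin d) ℝ) ^ (ik.2 : ℕ) with hw
  -- degree bound on each w
  have hdegw : ∀ ik, (w ik).totalDegree ≤ E := by
    intro ik
    have hsum : (∑ i, (ik.1 i : ℕ)) ≤ d * M := by
      calc (∑ i, (ik.1 i : ℕ)) ≤ ∑ _i : Fin d, M :=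
            Finset.sum_le_sum (fun i _ => Nat.lt_succ_iff.mp (ik.1 i).isLt)
        _ = d * M := by simp [Finset.sum_const, Finset.card_univ, Nat.mul_comm]
    have h1 : (∏ i, φ i ^ (ik.1 i : ℕ)).totalDegree ≤ (∑ i, (ik.1 i : ℕ)) * D₁ := by
      calc (∏ i, φ i ^ (ik.1 i : ℕ)).totalDegree
          ≤ ∑ i, (φ i ^ (ik.1 i : ℕ)).totalDegree := totalDegree_finset_prod _ _
        _ ≤ ∑ i, (ik.1 i : ℕ) * D₁ := Finset.sum_le_sum (fun i _ =>
            le_trans (totalDegree_pow _ _) (Nat.mul_le_mul_left _ (hφdeg i)))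
        _ = (∑ i, (ik.1 i : ℕ)) * D₁ := by rw [Finset.sum_mul]
    have h2 : (f ^ (d * M - ∑ i, (ik.1 i : ℕ))).totalDegree
        ≤ (d * M - ∑ i, (ik.1 i : ℕ)) * D₁ :=
      le_trans (totalDegree_pow _ _) (Nat.mul_le_mul_left _ hfdeg)
    have h3 : ((X j : MvPolynomial (Fin d) ℝ) ^ (ik.2 : ℕ)).totalDegree ≤ M := by
      refine le_trans (totalDegree_pow _ _) ?_
      have := totalDegree_X (R := ℝ) j
      have hk : (ik.2 : ℕ) ≤ M := Nat.lt_succ_iff.mp ik.2.isLt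
      calc (ik.2 : ℕ) * (X j : MvPolynomial (Fin d) ℝ).totalDegree
          = (ik.2 : ℕ) := by rw [this]; ring
        _ ≤ M := hk
    calc (w ik).totalDegree
        ≤ ((∏ i, φ i ^ (ik.1 i : ℕ)) * f ^ (d * M - ∑ i, (ik.1 i : ℕ))).totalDegree
          + ((X j : MvPolynomial (Fin d) ℝ) ^ (ik.2 : ℕ)).totalDegree :=
          totalDegree_mul _ _
      _ ≤ ((∏ i, φ i ^ (ik.1 i : ℕ)).totalDegree
            + (f ^ (d * M - ∑ i, (ik.1 i : ℕ))).totalDegree) + M := by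
          have := totalDegree_mul (∏ i, φ i ^ (ik.1 i : ℕ)) (f ^ (d * M - ∑ i, (ik.1 i : ℕ)))
          omega
      _ ≤ ((∑ i, (ik.1 i : ℕ)) * D₁ + (d * M - ∑ i, (ik.1 i : ℕ)) * D₁) + M := by omega
      _ = E := by
          rw [← Nat.add_mul, Nat.add_sub_cancel' hsum, hE]
          ring
  -- the coefficient-restriction linear map
  set L : MvPolynomial (Fin d) ℝ →ₗ[ℝ] ((Fin d → Fin (E + 1)) → ℝ) :=
    { toFun := fun p s => coeff (Finsupp.equivFunOnFinite.symm (fun i => (s i : ℕ))) p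
      map_add' := by intro p q; funext s; simp [coeff_add]
      map_smul' := by intro r p; funext s; simp [coeff_smul] } with hL
  -- w is not linearly independent
  have hnli : ¬ LinearIndependent ℝ w := by
    intro hli
    have hker : Disjoint (Submodule.span ℝ (Set.range w)) (LinearMap.ker L) := by
      rw [Submodule.disjoint_def]
      intro p hsp hkp
      have hdeg : p.totalDegree ≤ E := by
        have hsub : Submodule.span ℝ (Set.range w) ≤ restrictTotalDegree (Fin d) ℝ E := by
          rw [Submodule.span_le]
          rintro _ ⟨ik, rfl⟩
          rw [SetLike.mem_coe, mem_restrictTotalDegree]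
          exact hdegw ik
        exact (mem_restrictTotalDegree _ _ _).mp (hsub hsp)
      have hLp : L p = 0 := LinearMap.mem_ker.mp hkp
      ext m
      by_contra hcm
      have hmsup : m ∈ p.support := by rwa [MvPolynomial.mem_support_iff]
      have hmle : ∀ i, m i ≤ E := by
        intro i
        have h1 : (m.sum fun _ e => e) ≤ p.totalDegree := MvPolynomial.le_totalDegree hmsup
        have h2 : m i ≤ m.sum fun _ e => e := by
          by_cases h : m i = 0
          · omega
          · have h1 : m i ≤ ∑ a ∈ m.support, m a :=
              Finset.single_le_sum (fun a _ => Nat.zero_le _) (Finsupp.mem_support_iff.mpr h)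
            simpa [Finsupp.sum] using h1
        omega
      have : coeff m p = 0 := by
        have := congrFun hLp (fun i => (⟨m i, Nat.lt_succ_of_le (hmle i)⟩ : Fin (E + 1)))
        simp only [hL, LinearMap.coe_mk, AddHom.coe_mk, Pi.zero_apply] at this
        convert this using 2
        apply Finsupp.ext
        intro i
        simp
      rw [MvPolynomial.coeff_zero] at hcm
      exact hcm this
    have hli2 : LinearIndependent ℝ (L ∘ w) := hli.map hker
    have hcard := hli2.fintype_card_le_finrank
    rw [Module.finrank_pi] at hcard
    simp only [Fintype.card_prod, Fintype.card_fun, Fintype.card_fin] at hcard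
    -- (M+1)^d * (M+1) ≤ (E+1)^d : contradiction
    have hE1 : E + 1 ≤ (D₁ * d + 2) * M := by
      have h1 : E + 1 = (D₁ * d + 1) * M + 1 := by rw [hE]; ring
      have h2 : (D₁ * d + 2) * M = (D₁ * d + 1) * M + M := by ring
      omega
    have h2 : (E + 1) ^ d ≤ ((D₁ * d + 2) * M) ^ d := Nat.pow_le_pow_left hE1 d
    have h3 : ((D₁ * d + 2) * M) ^ d = M * M ^ d := by
      rw [mul_pow, ← hM]
    have h4 : M * M ^ d < (M + 1) ^ d * (M + 1) := by
      have : M ^ (d + 1) < (M + 1) ^ (d + 1) :=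
        Nat.pow_lt_pow_left (Nat.lt_succ_self M) (Nat.succ_ne_zero d)
      calc M * M ^ d = M ^ (d + 1) := by ring
        _ < (M + 1) ^ (d + 1) := this
        _ = (M + 1) ^ d * (M + 1) := by ring
    omega
  obtain ⟨c, hc0, ⟨ik, hik⟩⟩ := Fintype.not_linearIndependent_iff.mp hnli
  exact ⟨c, ⟨ik, hik⟩, hc0⟩






noncomputable def toF {d m : ℕ} (α : Fin d → Fin (m + 1)) : Fin d →₀ ℕ :=
  Finsupp.equivFunOnFinite.symm (fun i => (α i : ℕ))

theorem toF_inj {d m : ℕ} : Function.Injective (toF (d := d) (m := m)) := by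
  intro α β h
  funext i
  have := congrArg (fun g => g i) (congrArg (Finsupp.equivFunOnFinite) h)
  simp [toF] at this
  exact Fin.ext this

theorem exists_good_a {d : ℕ} (f : MvPolynomial (Fin d) ℝ) (hf : f ≠ 0) :
    ∃ a : Fin d → ℝ,
      {x : Fin d → ℝ | eval x f ≠ 0 ∧
        ∀ i, eval x (pderiv i f) = eval x f * (x i - a i)}.Finite := by
  classical
  set φ : Fin d → MvPolynomial (Fin d) ℝ := fun i => f * X i - pderiv i f with hφ
  have hdep := fun j => exists_dependence φ f j
  choose M c hcne hrel using hdep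
  choose ikstar hikstar using hcne
  have hsumle : ∀ (j) (α : Fin d → Fin (M j + 1)), (∑ i, (α i : ℕ)) ≤ d * M j := by
    intro j α
    calc (∑ i, (α i : ℕ)) ≤ ∑ _i : Fin d, M j :=
          Finset.sum_le_sum (fun i _ => Nat.lt_succ_iff.mp (α i).isLt)
      _ = d * M j := by simp [Finset.sum_const, Finset.card_univ, Nat.mul_comm]
  set Dp : Fin d → MvPolynomial (Fin d) ℝ :=
    fun j => ∑ α : Fin d → Fin (M j + 1), monomial (toF α) (c j (α, (ikstar j).2)) with hDp
  have hevalDp : ∀ (j) (a : Fin d → ℝ),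
      eval a (Dp j) = ∑ α : Fin d → Fin (M j + 1),
        c j (α, (ikstar j).2) * ∏ i, a i ^ (α i : ℕ) := by
    intro j a
    rw [hDp, map_sum]
    apply Finset.sum_congr rfl
    intro α _
    rw [eval_monomial]
    congr 1
    rw [toF, Finsupp.prod_fintype]
    · simp
    · intro i; simp
  have hDpne : ∀ j, Dp j ≠ 0 := by
    intro j hzero
    apply hikstar j
    have hco : coeff (toF (ikstar j).1) (Dp j) = c j ((ikstar j).1, (ikstar j).2) := by
      rw [hDp, MvPolynomial.coeff_sum]
      rw [Finset.sum_eq_single (ikstar j).1]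
      · rw [coeff_monomial, if_pos rfl]
      · intro b _ hb
        rw [coeff_monomial, if_neg (fun h => hb (toF_inj h))]
      · intro h; exact absurd (Finset.mem_univ _) h
    rw [hzero] at hco
    simp only [coeff_zero] at hco
    rw [show ikstar j = ((ikstar j).1, (ikstar j).2) from rfl]
    exact hco.symm
  -- choose a real point where all Dp j are nonzero
  have hD : (∏ j, Dp j) ≠ 0 := Finset.prod_ne_zero_iff.mpr (fun j _ => hDpne j)
  have hexa : ∃ a : Fin d → ℝ, eval a (∏ j, Dp j) ≠ 0 := by
    by_contra hcon
    push_neg at hcon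
    apply hD
    apply MvPolynomial.funext (q := 0)
    intro x
    simpa using hcon x
  obtain ⟨a, ha⟩ := hexa
  have hDja : ∀ j, eval a (Dp j) ≠ 0 := by
    intro j
    rw [map_prod] at ha
    exact Finset.prod_ne_zero_iff.mp ha j (Finset.mem_univ j)
  refine ⟨a, ?_⟩
  -- the univariate root polynomials
  set q : Fin d → Polynomial ℝ := fun j =>
    ∑ k : Fin (M j + 1), Polynomial.C (∑ α : Fin d → Fin (M j + 1),
      c j (α, k) * ∏ i, a i ^ (α i : ℕ)) * Polynomial.X ^ (k : ℕ) with hq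
  have hqne : ∀ j, q j ≠ 0 := by
    intro j hzero
    apply hDja j
    have hco : (q j).coeff ((ikstar j).2 : ℕ) = ∑ α : Fin d → Fin (M j + 1),
        c j (α, (ikstar j).2) * ∏ i, a i ^ (α i : ℕ) := by
      rw [hq]
      rw [Polynomial.finset_sum_coeff]
      rw [Finset.sum_eq_single (ikstar j).2]
      · rw [Polynomial.coeff_C_mul, Polynomial.coeff_X_pow, if_pos rfl, mul_one]
      · intro b _ hb
        rw [Polynomial.coeff_C_mul, Polynomial.coeff_X_pow,
          if_neg (fun h => hb (Fin.ext h).symm), mul_zero]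
      · intro h; exact absurd (Finset.mem_univ _) h
    rw [hzero] at hco
    simp only [Polynomial.coeff_zero] at hco
    rw [hevalDp]
    exact hco.symm
  -- main inclusion
  have hsub : {x : Fin d → ℝ | eval x f ≠ 0 ∧
        ∀ i, eval x (pderiv i f) = eval x f * (x i - a i)} ⊆
      Set.pi Set.univ (fun j => {t : ℝ | (q j).IsRoot t}) := by
    rintro x ⟨hF, hx⟩ j _
    have hφx : ∀ i, eval x (φ i) = eval x f * a i := by
      intro i
      rw [hφ]
      simp only [map_sub, map_mul, eval_X]
      rw [hx i]
      ring
    have h0 := congrArg (MvPolynomial.eval x) (hrel j)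
    rw [map_sum, map_zero] at h0
    have hterm : ∀ ik : ((Fin d → Fin (M j + 1)) × Fin (M j + 1)),
        eval x (c j ik • ((∏ i, φ i ^ (ik.1 i : ℕ)) * f ^ (d * (M j) - ∑ i, (ik.1 i : ℕ))
          * (X j : MvPolynomial (Fin d) ℝ) ^ (ik.2 : ℕ)))
        = (eval x f) ^ (d * M j) *
            (c j ik * (∏ i, a i ^ (ik.1 i : ℕ)) * (x j) ^ (ik.2 : ℕ)) := by
      intro ik
      rw [smul_eq_C_mul]
      simp only [map_mul, map_pow, map_prod, eval_C, eval_X]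
      have : ∀ i, eval x (φ i) ^ (ik.1 i : ℕ)
          = (eval x f) ^ (ik.1 i : ℕ) * a i ^ (ik.1 i : ℕ) := by
        intro i; rw [hφx i, mul_pow]
      rw [Finset.prod_congr rfl (fun i _ => this i), Finset.prod_mul_distrib,
        Finset.prod_pow_eq_pow_sum]
      have hpow : (eval x f) ^ (∑ i, (ik.1 i : ℕ)) * (eval x f) ^ (d * M j - ∑ i, (ik.1 i : ℕ))
          = (eval x f) ^ (d * M j) := by
        rw [← pow_add, Nat.add_sub_cancel' (hsumle j ik.1)]
      linear_combination (c j ik * (∏ i, a i ^ (ik.1 i : ℕ)) * (x j) ^ (ik.2 : ℕ)) * hpow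
    rw [Finset.sum_congr rfl (fun ik _ => hterm ik), ← Finset.mul_sum] at h0
    have hFpow : (eval x f) ^ (d * M j) ≠ 0 := pow_ne_zero _ hF
    have hsum0 := (mul_eq_zero.mp h0).resolve_left hFpow
    show (q j).eval (x j) = 0
    rw [hq]
    rw [Polynomial.eval_finset_sum]
    simp only [Polynomial.eval_mul, Polynomial.eval_C, Polynomial.eval_pow, Polynomial.eval_X]
    rw [← hsum0, Fintype.sum_prod_type]
    rw [Finset.sum_comm]
    apply Finset.sum_congr rfl
    intro k _
    rw [Finset.sum_mul]
  exact Set.Finite.subset (Set.Finite.pi (fun j => Polynomial.finite_setOf_isRoot (hqne j))) hsub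






/-- substitution of the line `t ↦ z + t eᵢ` into a multivariate polynomial -/
noncomputable def lineSub {d : ℕ} (z : Fin d → ℝ) (i : Fin d) :
    MvPolynomial (Fin d) ℝ →ₐ[ℝ] Polynomial ℝ :=
  MvPolynomial.aeval (fun j => Polynomial.C (z j) + if j = i then Polynomial.X else 0)

theorem lineSub_eval {d : ℕ} (z : Fin d → ℝ) (i : Fin d) (f : MvPolynomial (Fin d) ℝ) (t : ℝ) :
    (lineSub z i f).eval t = eval (fun j => z j + if j = i then t else 0) f := by
  induction f using MvPolynomial.induction_on with
  | C a => simp [lineSub]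
  | add p q hp hq => simp [map_add, hp, hq]
  | mul_X p j hp =>
    simp only [lineSub, map_mul, Polynomial.eval_mul, hp] at *
    rw [show (MvPolynomial.aeval fun j => Polynomial.C (z j)
      + if j = i then Polynomial.X else 0) (X j)
        = Polynomial.C (z j) + if j = i then Polynomial.X else 0 from aeval_X _ j]
    simp only [eval_mul, eval_X, lineSub, hp]
    by_cases h : j = i <;> simp [h]

theorem lineSub_derivative {d : ℕ} (z : Fin d → ℝ) (i : Fin d) (f : MvPolynomial (Fin d) ℝ) :
    Polynomial.derivative (lineSub z i f) = lineSub z i (pderiv i f) := by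
  induction f using MvPolynomial.induction_on with
  | C a => simp [lineSub]
  | add p q hp hq => simp [map_add, hp, hq]
  | mul_X p j hp =>
    have hXj : (lineSub z i) (X j) = Polynomial.C (z j) + if j = i then Polynomial.X else 0 :=
      aeval_X _ j
    rw [map_mul, Polynomial.derivative_mul, hp, hXj, pderiv_mul]
    simp only [map_add, map_mul, hXj, pderiv_X, Pi.single_apply]
    by_cases h : j = i <;> simp [h] <;> ring

theorem crit_of_localMax {d : ℕ} (f : MvPolynomial (Fin d) ℝ) (a z : Fin d → ℝ)
    (hmax : IsLocalMax (fun x : Fin d → ℝ =>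
      (eval x f) ^ 2 * Real.exp (-∑ i, (x i - a i) ^ 2)) z)
    (hz : eval z f ≠ 0) (i : Fin d) :
    eval z (pderiv i f) = eval z f * (z i - a i) := by
  classical
  set h : (Fin d → ℝ) → ℝ := fun x => (eval x f) ^ 2 * Real.exp (-∑ i, (x i - a i) ^ 2)
    with hh
  set γ : ℝ → (Fin d → ℝ) := fun t j => z j + if j = i then t else 0 with hγ
  have hγ0 : γ 0 = z := by funext j; simp [hγ]
  have hγc : Continuous γ := by
    apply continuous_pi
    intro j
    by_cases hj : j = i
    · simpa [hγ, hj] using (continuous_add_left (z i))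
    · simpa [hγ, hj] using continuous_const
  have hψmax : IsLocalMax (h ∘ γ) 0 := by
    have ht : Filter.Tendsto γ (nhds 0) (nhds z) := by
      rw [← hγ0]; exact hγc.continuousAt.tendsto
    have := ht.eventually hmax
    simpa [IsLocalMax, IsMaxFilter, hγ0] using this
  -- explicit formula for h ∘ γ
  set P : Polynomial ℝ := lineSub z i f with hP
  set b : ℝ := z i - a i with hb
  set Qc : ℝ := ∑ j ∈ Finset.univ.erase i, (z j - a j) ^ 2 with hQc
  have hψeq : ∀ t, (h ∘ γ) t = (P.eval t) ^ 2 * Real.exp (-(Qc + (t + b) ^ 2)) := by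
    intro t
    have h1 : eval (γ t) f = P.eval t := (lineSub_eval z i f t).symm
    have h2 : (∑ j, (γ t j - a j) ^ 2) = Qc + (t + b) ^ 2 := by
      rw [← Finset.add_sum_erase _ _ (Finset.mem_univ i)]
      have hγi : γ t i = z i + t := by simp [hγ]
      rw [hγi]
      have : ∀ j ∈ Finset.univ.erase i, (γ t j - a j) ^ 2 = (z j - a j) ^ 2 := by
        intro j hj
        have : j ≠ i := Finset.ne_of_mem_erase hj
        simp [hγ, this]
      rw [Finset.sum_congr rfl this]
      rw [hQc, hb]
      ring
    simp only [Function.comp_apply, hh, h1, h2]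
  -- derivative of the slice at 0
  have hPd : HasDerivAt (fun t => P.eval t) (P.derivative.eval 0) 0 := Polynomial.hasDerivAt P 0
  have hP2 : HasDerivAt (fun t => (P.eval t) ^ 2) (2 * (P.eval 0) ^ 1 * (P.derivative.eval 0)) 0 :=
    hPd.pow 2
  have hg : HasDerivAt (fun t : ℝ => Qc + (t + b) ^ 2) (2 * (0 + b) ^ 1 * 1) 0 :=
    (((hasDerivAt_id (0:ℝ)).add_const b).pow 2).const_add Qc
  have hexp : HasDerivAt (fun t : ℝ => Real.exp (-(Qc + (t + b) ^ 2)))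
      (Real.exp (-(Qc + (0 + b) ^ 2)) * -(2 * (0 + b) ^ 1 * 1)) 0 := by
    exact (hg.neg).exp
  have hψd : HasDerivAt (fun t => (P.eval t) ^ 2 * Real.exp (-(Qc + (t + b) ^ 2)))
      ((2 * (P.eval 0) ^ 1 * (P.derivative.eval 0)) * Real.exp (-(Qc + (0 + b) ^ 2))
        + (P.eval 0) ^ 2 * (Real.exp (-(Qc + (0 + b) ^ 2)) * -(2 * (0 + b) ^ 1 * 1))) 0 :=
    hP2.mul hexp
  have hψd' : HasDerivAt (h ∘ γ)
      ((2 * (P.eval 0) ^ 1 * (P.derivative.eval 0)) * Real.exp (-(Qc + (0 + b) ^ 2))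
        + (P.eval 0) ^ 2 * (Real.exp (-(Qc + (0 + b) ^ 2)) * -(2 * (0 + b) ^ 1 * 1))) 0 := by
    apply hψd.congr_of_eventuallyEq
    exact Filter.Eventually.of_forall (fun t => (hψeq t))
  have hder0 : deriv (h ∘ γ) 0 = 0 := hψmax.deriv_eq_zero
  rw [hψd'.deriv] at hder0
  -- unpack
  have harg : (fun j => z j + if j = i then (0:ℝ) else 0) = z := by
    funext j; by_cases hj : j = i <;> simp [hj]
  have hP0 : P.eval 0 = eval z f := by
    rw [hP, lineSub_eval, harg]
  have hPd0 : P.derivative.eval 0 = eval z (pderiv i f) := by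
    rw [hP, lineSub_derivative, lineSub_eval, harg]
  rw [hP0, hPd0] at hder0
  have he : Real.exp (-(Qc + (0 + b) ^ 2)) > 0 := Real.exp_pos _
  have hfz := hz
  -- 2 F P' e + F² e (−2b) = 0  ⇒  P' = F b
  have : Real.exp (-(Qc + (0 + b) ^ 2)) *
      (2 * eval z f * (eval z (pderiv i f) - eval z f * b)) = 0 := by
    linear_combination hder0
  have h2 := (mul_eq_zero.mp this).resolve_left (ne_of_gt he)
  have h3 := mul_eq_zero.mp h2
  rcases h3 with h3 | h3
  · rcases mul_eq_zero.mp h3 with h4 | h4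
    · norm_num at h4
    · exact absurd h4 hfz
  · rw [hb] at h3 ⊢
    linarith

/-- each connected component of `{f ≠ 0}` contains a local max of `f² exp(-|x-a|²)` -/
theorem component_has_localMax {d : ℕ} (f : MvPolynomial (Fin d) ℝ) (a x₀ : Fin d → ℝ)
    (hx₀ : eval x₀ f ≠ 0) :
    ∃ z ∈ connectedComponentIn {x : Fin d → ℝ | eval x f ≠ 0} x₀,
      IsLocalMax (fun x : Fin d → ℝ =>
        (eval x f) ^ 2 * Real.exp (-∑ i, (x i - a i) ^ 2)) z := by
  classical
  set Ω : Set (Fin d → ℝ) := {x | eval x f ≠ 0} with hΩ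
  have hΩopen : IsOpen Ω := by
    have : Ω = (fun x => eval x f) ⁻¹' ({0}ᶜ) := rfl
    rw [this]
    exact (isOpen_compl_singleton).preimage (MvPolynomial.continuous_eval _)
  set h : (Fin d → ℝ) → ℝ := fun x => (eval x f) ^ 2 * Real.exp (-∑ i, (x i - a i) ^ 2)
    with hh
  have hcont : Continuous h := by
    apply Continuous.mul
    · exact (MvPolynomial.continuous_eval _).pow 2
    · apply Real.continuous_exp.comp
      apply Continuous.neg
      apply continuous_finset_sum
      intro i _
      exact ((continuous_apply i).sub continuous_const).pow 2
  have hpos : ∀ x, 0 ≤ h x := by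
    intro x
    apply mul_nonneg (sq_nonneg _) (Real.exp_pos _).le
  have hx₀pos : 0 < h x₀ := by
    apply mul_pos _ (Real.exp_pos _)
    exact (sq_nonneg _).lt_of_ne (Ne.symm (pow_ne_zero 2 hx₀))
  -- decay at infinity
  obtain ⟨B, hB, hBle⟩ := FMC.eval_abs_le f
  have hnormsq : ∀ y : Fin d → ℝ, ‖y‖ ^ 2 ≤ ∑ i, y i ^ 2 := by
    intro y
    have h1 : ‖y‖ ≤ Real.sqrt (∑ i, y i ^ 2) := by
      rw [pi_norm_le_iff_of_nonneg (Real.sqrt_nonneg _)]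
      intro i
      rw [Real.norm_eq_abs, ← Real.sqrt_sq_eq_abs]
      apply Real.sqrt_le_sqrt
      exact Finset.single_le_sum (f := fun i => y i ^ 2) (fun i _ => sq_nonneg _)
        (Finset.mem_univ i)
    calc ‖y‖ ^ 2 ≤ Real.sqrt (∑ i, y i ^ 2) ^ 2 :=
          pow_le_pow_left₀ (norm_nonneg _) h1 2
      _ = ∑ i, y i ^ 2 := Real.sq_sqrt (Finset.sum_nonneg (fun i _ => sq_nonneg _))
  set D : ℕ := f.totalDegree with hD
  have hhle : ∀ x : Fin d → ℝ, ‖a‖ + 1 ≤ ‖x‖ →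
      h x ≤ (B ^ 2 * Real.exp (‖a‖)) * ((1 + ‖x‖) ^ (2 * D) * Real.exp (-(‖x‖))) := by
    intro x hx
    have h1 : (eval x f) ^ 2 ≤ B ^ 2 * (1 + ‖x‖) ^ (2 * D) := by
      have := hBle x
      calc (eval x f) ^ 2 = |eval x f| ^ 2 := (sq_abs _).symm
        _ ≤ (B * (1 + ‖x‖) ^ D) ^ 2 := pow_le_pow_left₀ (abs_nonneg _) this 2
        _ = B ^ 2 * (1 + ‖x‖) ^ (2 * D) := by rw [mul_pow, ← pow_mul]; ring_nf
    have h2 : Real.exp (-∑ i, (x i - a i) ^ 2) ≤ Real.exp (‖a‖) * Real.exp (-(‖x‖)) := by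
      rw [← Real.exp_add]
      apply Real.exp_le_exp.mpr
      have h3 : ‖x‖ - ‖a‖ ≤ ‖x - a‖ := by
        have := norm_sub_norm_le x a
        linarith
      have h4 : (‖x‖ - ‖a‖) ≤ (‖x‖ - ‖a‖) ^ 2 := by
        nlinarith [hx, norm_nonneg a]
      have h5 : (‖x‖ - ‖a‖) ^ 2 ≤ ‖x - a‖ ^ 2 := by
        apply pow_le_pow_left₀ _ h3 2
        nlinarith [hx, norm_nonneg a]
      have h6 := hnormsq (x - a)
      have h7 : ∀ i, (x - a) i ^ 2 = (x i - a i) ^ 2 := by intro i; rfl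
      rw [Finset.sum_congr rfl (fun i _ => h7 i)] at h6
      linarith
    calc h x ≤ (B ^ 2 * (1 + ‖x‖) ^ (2 * D)) * (Real.exp (‖a‖) * Real.exp (-(‖x‖))) := by
          apply mul_le_mul h1 h2 (Real.exp_pos _).le
          positivity
      _ = (B ^ 2 * Real.exp (‖a‖)) * ((1 + ‖x‖) ^ (2 * D) * Real.exp (-(‖x‖))) := by ring
  -- the scalar bound tends to 0
  have htend : Filter.Tendsto
      (fun r : ℝ => (B ^ 2 * Real.exp (‖a‖)) * ((1 + r) ^ (2 * D) * Real.exp (-r)))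
      Filter.atTop (nhds 0) := by
    have h1 : Filter.Tendsto (fun r : ℝ => (1 + r) ^ (2 * D) * Real.exp (-(1 + r)))
        Filter.atTop (nhds 0) := by
      have := (Real.tendsto_pow_mul_exp_neg_atTop_nhds_zero (2 * D)).comp
        (Filter.tendsto_atTop_add_const_left Filter.atTop (1:ℝ) Filter.tendsto_id)
      exact this.congr (fun r => by simp [Function.comp])
    have h2 : Filter.Tendsto (fun r : ℝ => (1 + r) ^ (2 * D) * Real.exp (-r))
        Filter.atTop (nhds 0) := by
      have := h1.const_mul (Real.exp 1)
      rw [mul_zero] at this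
      apply this.congr
      intro r
      rw [show -r = 1 + -(1+r) by ring, Real.exp_add]
      ring
    have := h2.const_mul (B ^ 2 * Real.exp (‖a‖))
    rw [mul_zero] at this
    exact this
  have hev : ∀ᶠ r : ℝ in Filter.atTop,
      (B ^ 2 * Real.exp (‖a‖)) * ((1 + r) ^ (2 * D) * Real.exp (-r)) < h x₀ :=
    htend.eventually_lt_const hx₀pos
  obtain ⟨R₀, hR₀⟩ := Filter.eventually_atTop.mp hev
  set R : ℝ := max (max ‖x₀‖ (‖a‖ + 1)) R₀ with hR
  have hfar : ∀ x : Fin d → ℝ, R < ‖x‖ → h x < h x₀ := by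
    intro x hx
    have hx1 : ‖a‖ + 1 ≤ ‖x‖ := le_trans (le_trans (le_max_right _ _) (le_max_left _ _)) hx.le
    have hx2 : R₀ ≤ ‖x‖ := le_trans (le_max_right _ _) hx.le
    exact lt_of_le_of_lt (hhle x hx1) (hR₀ ‖x‖ hx2)
  -- compact max
  set C : Set (Fin d → ℝ) := connectedComponentIn Ω x₀ with hC
  have hCopen : IsOpen C := hΩopen.connectedComponentIn
  have hx₀C : x₀ ∈ C := mem_connectedComponentIn hx₀
  set K : Set (Fin d → ℝ) := closure C ∩ Metric.closedBall 0 R with hK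
  have hKcomp : IsCompact K := (isCompact_closedBall 0 R).inter_left isClosed_closure
  have hx₀K : x₀ ∈ K := by
    constructor
    · exact subset_closure hx₀C
    · rw [Metric.mem_closedBall, dist_zero_right]
      exact le_trans (le_max_left _ _) (le_max_left _ _)
  obtain ⟨z, hzK, hzmax⟩ := hKcomp.exists_isMaxOn ⟨x₀, hx₀K⟩ hcont.continuousOn
  have hzx₀ : h x₀ ≤ h z := hzmax hx₀K
  have hzpos : 0 < h z := lt_of_lt_of_le hx₀pos hzx₀
  have hzf : eval z f ≠ 0 := by
    intro hzero
    rw [hh] at hzpos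
    simp only [hzero] at hzpos
    norm_num at hzpos
  have hzΩ : z ∈ Ω := hzf
  -- z is in C
  have hzC : z ∈ C := by
    have hzCl : z ∈ closure C := hzK.1
    have hopen : IsOpen (connectedComponentIn Ω z) := hΩopen.connectedComponentIn
    have hzmem : z ∈ connectedComponentIn Ω z := mem_connectedComponentIn hzΩ
    obtain ⟨y, hy1, hy2⟩ := _root_.mem_closure_iff.mp hzCl _ hopen hzmem
    have e1 : connectedComponentIn Ω z = connectedComponentIn Ω y := connectedComponentIn_eq hy1
    have e2 : connectedComponentIn Ω x₀ = connectedComponentIn Ω y := connectedComponentIn_eq hy2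
    rw [hC, e2, ← e1]
    exact hzmem
  refine ⟨z, hzC, ?_⟩
  -- local max
  have hCz : C ∈ nhds z := hCopen.mem_nhds hzC
  apply Filter.eventually_of_mem hCz
  intro y hy
  by_cases hyR : ‖y‖ ≤ R
  · apply hzmax
    constructor
    · exact subset_closure hy
    · rw [Metric.mem_closedBall, dist_zero_right]; exact hyR
  · have := hfar y (lt_of_not_ge hyR)
    exact le_trans this.le hzx₀

end FMC


/-- A set `U ⊆ ℝ^d` is definable by polynomials if membership in `U` is determined by
the signs of finitely many polynomials. -/
def DefinableByPolynomials {d : ℕ} (U : Set (Fin d → ℝ)) : Prop :=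
  ∃ (ℓ : ℕ) (Q : Fin ℓ → MvPolynomial (Fin d) ℝ) (S : Set (Fin ℓ → SignType)),
    U = {x | (fun i => SignType.sign (MvPolynomial.eval x (Q i))) ∈ S}

/-- **Fact 3.7.** If `U ⊆ ℝ^d` is an open set definable by polynomials and
`R₁,…,R_k` are real polynomials, then the open set
`{x ∈ U : Rᵢ(x) ≠ 0 for all i}` has only finitely many connected components. -/
theorem finitely_many_components (d k : ℕ) (U : Set (Fin d → ℝ))
    (hUopen : IsOpen U) (hUdef : DefinableByPolynomials U)
    (R : Fin k → MvPolynomial (Fin d) ℝ) :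
    Finite (ConnectedComponents
      {x : Fin d → ℝ | x ∈ U ∧ ∀ i, MvPolynomial.eval x (R i) ≠ 0}) := by
  classical
  obtain ⟨ℓ, Q, S, hU⟩ := hUdef
  set X : Set (Fin d → ℝ) := {x : Fin d → ℝ | x ∈ U ∧ ∀ i, MvPolynomial.eval x (R i) ≠ 0}
    with hX
  by_cases hR0 : ∃ i, R i = 0
  · obtain ⟨i, hi⟩ := hR0
    have hXempty : X = ∅ := by
      ext x
      simp only [hX, Set.mem_setOf_eq, Set.mem_empty_iff_false, iff_false, not_and]
      intro _
      intro hall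
      exact hall i (by rw [hi]; simp)
    have : Finite ↥X := by rw [hXempty]; exact Set.finite_empty.to_subtype
    exact Finite.of_surjective _ ConnectedComponents.surjective_coe
  push_neg at hR0
  -- the single polynomial G
  set Jq : Finset (Fin ℓ) := Finset.univ.filter (fun j => Q j ≠ 0) with hJq
  set G : MvPolynomial (Fin d) ℝ := (∏ j ∈ Jq, Q j) * ∏ i, R i with hG
  have hGne : G ≠ 0 := by
    apply mul_ne_zero
    · exact Finset.prod_ne_zero_iff.mpr (fun j hj => (Finset.mem_filter.mp hj).2)
    · exact Finset.prod_ne_zero_iff.mpr (fun i _ => hR0 i)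
  set Ω : Set (Fin d → ℝ) := {x | MvPolynomial.eval x G ≠ 0} with hΩ
  have hΩfacQ : ∀ x ∈ Ω, ∀ j ∈ Jq, MvPolynomial.eval x (Q j) ≠ 0 := by
    intro x hx j hj
    intro hzero
    apply hx
    rw [hG]
    simp only [map_mul, map_prod]
    exact mul_eq_zero_of_left (Finset.prod_eq_zero hj hzero) _
  have hΩfacR : ∀ x ∈ Ω, ∀ i, MvPolynomial.eval x (R i) ≠ 0 := by
    intro x hx i hzero
    apply hx
    rw [hG]
    simp only [map_mul, map_prod]
    exact mul_eq_zero_of_right _ (Finset.prod_eq_zero (Finset.mem_univ i) hzero)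
  -- X is open
  have hXopen : IsOpen X := by
    have : X = U ∩ ⋂ i, {x | MvPolynomial.eval x (R i) ≠ 0} := by
      ext x; simp [hX, Set.mem_iInter]
    rw [this]
    apply hUopen.inter
    apply isOpen_iInter_of_finite
    intro i
    exact (isOpen_compl_singleton).preimage (MvPolynomial.continuous_eval _)
  -- components of Ω that meet X lie in X
  have hsign : ∀ (x₁ : Fin d → ℝ), x₁ ∈ X → x₁ ∈ Ω →
      connectedComponentIn Ω x₁ ⊆ X := by
    intro x₁ hx₁X hx₁Ω y hy
    have hyΩ : y ∈ Ω := connectedComponentIn_subset _ _ hy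
    have hRy : ∀ i, MvPolynomial.eval y (R i) ≠ 0 := hΩfacR y hyΩ
    refine ⟨?_, hRy⟩
    rw [hU]
    have hx₁U' : x₁ ∈ U := hx₁X.1
    rw [hU] at hx₁U'
    have hx₁U : (fun i => SignType.sign (MvPolynomial.eval x₁ (Q i))) ∈ S := hx₁U'
    have hsigneq : (fun i => SignType.sign (MvPolynomial.eval y (Q i)))
        = (fun i => SignType.sign (MvPolynomial.eval x₁ (Q i))) := by
      funext j
      by_cases hQj : Q j = 0
      · rw [hQj]; simp
      · have hjJq : j ∈ Jq := by rw [hJq]; simp [hQj]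
        set W := connectedComponentIn Ω x₁ with hW
        have hWsub : W ⊆ {x | 0 < MvPolynomial.eval x (Q j)}
            ∪ {x | MvPolynomial.eval x (Q j) < 0} := by
          intro w hw
          have := hΩfacQ w (connectedComponentIn_subset _ _ hw) j hjJq
          rcases lt_or_gt_of_ne this with hlt | hgt
          · exact Or.inr hlt
          · exact Or.inl hgt
        have hdisj : Disjoint {x : Fin d → ℝ | 0 < MvPolynomial.eval x (Q j)}
            {x : Fin d → ℝ | MvPolynomial.eval x (Q j) < 0} := by
          rw [Set.disjoint_left]
          intro w hw1 hw2
          have h1 : 0 < MvPolynomial.eval w (Q j) := hw1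
          have h2 : MvPolynomial.eval w (Q j) < 0 := hw2
          exact absurd (h1.trans h2) (lt_irrefl 0)
        have hopen1 : IsOpen {x : Fin d → ℝ | 0 < MvPolynomial.eval x (Q j)} :=
          isOpen_lt continuous_const (MvPolynomial.continuous_eval _)
        have hopen2 : IsOpen {x : Fin d → ℝ | MvPolynomial.eval x (Q j) < 0} :=
          isOpen_lt (MvPolynomial.continuous_eval _) continuous_const
        have hsplit := isPreconnected_connectedComponentIn.subset_or_subset
          hopen1 hopen2 hdisj hWsub
        have hyW : y ∈ W := hy
        have hx₁W : x₁ ∈ W := mem_connectedComponentIn hx₁Ω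
        rcases hsplit with hs | hs
        · rw [sign_pos (hs hyW), sign_pos (hs hx₁W)]
        · rw [sign_neg (hs hyW), sign_neg (hs hx₁W)]
    show (fun i => SignType.sign (MvPolynomial.eval y (Q i))) ∈ S
    rw [hsigneq]
    exact hx₁U
  -- good shift and the finite fiber
  obtain ⟨a, hafin⟩ := FMC.exists_good_a G hGne
  set F : Set (Fin d → ℝ) := {x | MvPolynomial.eval x G ≠ 0 ∧
    ∀ i, MvPolynomial.eval x (pderiv i G) = MvPolynomial.eval x G * (x i - a i)} with hF
  -- every component of X contains a point of F ∩ X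
  have key : ∀ x ∈ X, ∃ z, (z ∈ F ∩ X) ∧ z ∈ connectedComponentIn X x := by
    intro x hxX
    set C := connectedComponentIn X x with hC
    have hCopen : IsOpen C := hXopen.connectedComponentIn
    have hxC : x ∈ C := mem_connectedComponentIn hxX
    obtain ⟨ε, hε, hball⟩ := Metric.isOpen_iff.mp hCopen x hxC
    obtain ⟨x₁, hx₁near, hx₁G⟩ := FMC.exists_eval_ne_zero_near d G hGne x ε hε
    have hx₁C : x₁ ∈ C := by
      apply hball
      rw [Metric.mem_ball]
      rw [dist_pi_lt_iff hε]
      intro i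
      rw [Real.dist_eq]
      exact hx₁near i
    have hx₁X : x₁ ∈ X := connectedComponentIn_subset _ _ hx₁C
    have hx₁Ω : x₁ ∈ Ω := hx₁G
    obtain ⟨z, hzW, hzmax⟩ := FMC.component_has_localMax G a x₁ hx₁G
    have hWsubΩ : connectedComponentIn Ω x₁ ⊆ Ω := by
      intro w hw; exact connectedComponentIn_subset _ _ hw
    have hzΩ : z ∈ Ω := hWsubΩ hzW
    have hzF : z ∈ F := by
      refine ⟨hzΩ, ?_⟩
      intro i
      exact FMC.crit_of_localMax G a z hzmax hzΩ i
    have hWsubX : connectedComponentIn Ω x₁ ⊆ X := hsign x₁ hx₁X hx₁Ω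
    have hzX : z ∈ X := hWsubX hzW
    have hWsubC : connectedComponentIn Ω x₁ ⊆ connectedComponentIn X x₁ :=
      isPreconnected_connectedComponentIn.subset_connectedComponentIn
        (mem_connectedComponentIn hx₁Ω) hWsubX
    have hCeq : connectedComponentIn X x = connectedComponentIn X x₁ :=
      connectedComponentIn_eq hx₁C
    refine ⟨z, ⟨hzF, hzX⟩, ?_⟩
    have hzin : z ∈ connectedComponentIn X x₁ := hWsubC hzW
    rw [← hCeq] at hzin
    exact hzin
  -- conclude via a surjection from the finite set F ∩ X
  have hFXfin : (F ∩ X).Finite := Set.Finite.inter_of_left hafin X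
  have : Finite ↥(F ∩ X) := hFXfin.to_subtype
  set τ : ↥(F ∩ X) → ConnectedComponents ↥X :=
    fun p => ConnectedComponents.mk ⟨p.val, p.2.2⟩ with hτ
  apply Finite.of_surjective τ
  intro c
  obtain ⟨xt, rfl⟩ := ConnectedComponents.surjective_coe c
  obtain ⟨z, hzFX, hzC⟩ := key xt.val xt.2
  refine ⟨⟨z, hzFX⟩, ?_⟩
  rw [hτ]
  rw [ConnectedComponents.coe_eq_coe]
  -- z ∈ connectedComponentIn X xt.val
  have hmem : xt.val ∈ X := xt.2
  rw [connectedComponentIn] at hzC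
  rw [dif_pos hmem] at hzC
  obtain ⟨w, hw1, hw2⟩ := hzC
  have : (⟨z, hzFX.2⟩ : ↥X) = w := Subtype.ext hw2.symm
  rw [this]
  have hx : (⟨xt.val, hmem⟩ : ↥X) = xt := Subtype.ext rfl
  rw [hx] at hw1
  exact (connectedComponent_eq hw1).symm
end

section
/- Let p₁, p₂, p₃, p₄, q, r' be real numbers with q > 0 and p₄ > 0, and let X₁, X₂ ∈ ℝ³ be given by X_{1,2} = (1/q)·(p₁ ± √(p₄/q)·u₁, p₂ ∓ √(p₄/q)·u₂, p₃ ± √(p₄/q)·u₃) for a fixed vector u = (u₁,u₂,u₃) ∈ ℝ³, and a point c' ∈ ℝ³. Then exactly one of ‖X₁ − c'‖² − r'² and ‖X₂ − c'‖² − r'² is negative and the other is positive if and only if 4·p₄·q·((p₁ − q·c'₁)·u₁ − (p₂ − q·c'₂)·u₂ + (p₃ − q·c'₃)·u₃)² > (q·(p₁ − q·c'₁)² + p₄·u₁² + q·(p₂ − q·c'₂)² + p₄·u₂² + q·(p₃ − q·c'₃)² + p₄·u₃² − q³·r'²)². -/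
/-- **Linking condition as a polynomial inequality** (Appendix A.2). Let `q > 0`,
`p₄ > 0`, and let `X₁, X₂ ∈ ℝ³` be given by
`X_{1,2} = (1/q)·(p₁ ± √(p₄/q)·u₁, p₂ ∓ √(p₄/q)·u₂, p₃ ± √(p₄/q)·u₃)`.
Then exactly one of `‖X₁ - c'‖² - r'²` and `‖X₂ - c'‖² - r'²` is negative and the
other positive if and only if
`4·p₄·q·((p₁-q·c'₁)u₁ - (p₂-q·c'₂)u₂ + (p₃-q·c'₃)u₃)² >`
`(q(p₁-q·c'₁)² + p₄u₁² + q(p₂-q·c'₂)² + p₄u₂² + q(p₃-q·c'₃)² + p₄u₃² - q³r'²)²`. -/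
theorem linking_polynomial_inequality
    (p₁ p₂ p₃ p₄ q r' u₁ u₂ u₃ c₁ c₂ c₃ : ℝ) (hq : 0 < q) (hp₄ : 0 < p₄) :
    (let s := Real.sqrt (p₄ / q)
     let A₁ := ((p₁ + s * u₁) / q - c₁) ^ 2 + ((p₂ - s * u₂) / q - c₂) ^ 2 +
       ((p₃ + s * u₃) / q - c₃) ^ 2 - r' ^ 2
     let A₂ := ((p₁ - s * u₁) / q - c₁) ^ 2 + ((p₂ + s * u₂) / q - c₂) ^ 2 +
       ((p₃ - s * u₃) / q - c₃) ^ 2 - r' ^ 2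
     (A₁ < 0 ∧ 0 < A₂) ∨ (A₂ < 0 ∧ 0 < A₁)) ↔
    4 * p₄ * q * ((p₁ - q * c₁) * u₁ - (p₂ - q * c₂) * u₂ + (p₃ - q * c₃) * u₃) ^ 2 >
      (q * (p₁ - q * c₁) ^ 2 + p₄ * u₁ ^ 2 + q * (p₂ - q * c₂) ^ 2 + p₄ * u₂ ^ 2 +
        q * (p₃ - q * c₃) ^ 2 + p₄ * u₃ ^ 2 - q ^ 3 * r' ^ 2) ^ 2 := by
  simp only
  set s := Real.sqrt (p₄ / q) with hsdef
  have hqne : q ≠ 0 := hq.ne'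
  have hs : s ^ 2 * q = p₄ := by
    rw [hsdef, Real.sq_sqrt (by positivity)]; field_simp
  set A₁ := ((p₁ + s * u₁) / q - c₁) ^ 2 + ((p₂ - s * u₂) / q - c₂) ^ 2 +
       ((p₃ + s * u₃) / q - c₃) ^ 2 - r' ^ 2 with hA₁
  set A₂ := ((p₁ - s * u₁) / q - c₁) ^ 2 + ((p₂ + s * u₂) / q - c₂) ^ 2 +
       ((p₃ - s * u₃) / q - c₃) ^ 2 - r' ^ 2 with hA₂
  have h1 : q ^ 2 * A₁ = (p₁ + s * u₁ - q * c₁) ^ 2 + (p₂ - s * u₂ - q * c₂) ^ 2 +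
      (p₃ + s * u₃ - q * c₃) ^ 2 - q ^ 2 * r' ^ 2 := by
    rw [hA₁]; field_simp
  have h2 : q ^ 2 * A₂ = (p₁ - s * u₁ - q * c₁) ^ 2 + (p₂ + s * u₂ - q * c₂) ^ 2 +
      (p₃ - s * u₃ - q * c₃) ^ 2 - q ^ 2 * r' ^ 2 := by
    rw [hA₂]; field_simp
  have key : q ^ 6 * (A₁ * A₂) =
      (q * (p₁ - q * c₁) ^ 2 + p₄ * u₁ ^ 2 + q * (p₂ - q * c₂) ^ 2 + p₄ * u₂ ^ 2 +
        q * (p₃ - q * c₃) ^ 2 + p₄ * u₃ ^ 2 - q ^ 3 * r' ^ 2) ^ 2 -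
      4 * p₄ * q * ((p₁ - q * c₁) * u₁ - (p₂ - q * c₂) * u₂ + (p₃ - q * c₃) * u₃) ^ 2 := by
    linear_combination (q ^ 2 * ((p₁ - s * u₁ - q * c₁) ^ 2 + (p₂ + s * u₂ - q * c₂) ^ 2 +
        (p₃ - s * u₃ - q * c₃) ^ 2 - q ^ 2 * r' ^ 2)) * h1 + (q ^ 4 * A₁) * h2 +
      ((u₁ ^ 2 + u₂ ^ 2 + u₃ ^ 2) *
        (2 * (q * ((p₁ - q * c₁) ^ 2 + (p₂ - q * c₂) ^ 2 + (p₃ - q * c₃) ^ 2) -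
          q ^ 3 * r' ^ 2) + q * s ^ 2 * (u₁ ^ 2 + u₂ ^ 2 + u₃ ^ 2) +
          p₄ * (u₁ ^ 2 + u₂ ^ 2 + u₃ ^ 2)) -
        4 * q * ((p₁ - q * c₁) * u₁ - (p₂ - q * c₂) * u₂ + (p₃ - q * c₃) * u₃) ^ 2) * hs
  constructor
  · rintro (⟨ha, hb⟩ | ⟨ha, hb⟩)
    · have hneg : A₁ * A₂ < 0 := mul_neg_of_neg_of_pos ha hb
      have h6 := mul_neg_of_pos_of_neg (pow_pos hq 6) hneg
      rw [key] at h6; linarith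
    · have hneg : A₁ * A₂ < 0 := mul_neg_of_pos_of_neg hb ha
      have h6 := mul_neg_of_pos_of_neg (pow_pos hq 6) hneg
      rw [key] at h6; linarith
  · intro h
    have h6 : q ^ 6 * (A₁ * A₂) < 0 := by rw [key]; linarith
    have hprod : A₁ * A₂ < 0 := by
      by_contra hcon
      push_neg at hcon
      exact absurd h6 (not_lt.mpr (mul_nonneg (pow_pos hq 6).le hcon))
    rcases mul_neg_iff.mp hprod with ⟨ha, hb⟩ | ⟨ha, hb⟩
    · exact Or.inr ⟨hb, ha⟩
    · exact Or.inl ⟨ha, hb⟩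
end

section
/- For every d ≥ 1, the number of partial orders on {1,…,n} of order dimension at most d is at most n^{(d+o(1))n} and at least n^{(d−o(1))n}; that is, it equals n^{(d+o(1))n} as n → ∞. -/
/-- A relation `r` on `{1,…,n}` has order dimension at most `d` if it is realized by
points `a₁,…,aₙ ∈ ℝ^d` whose coordinates are pairwise distinct in every direction,
with `r i j` (for `i ≠ j`) holding iff `aᵢ ≤ aⱼ` coordinatewise. -/
def HasOrderDimLE (d n : ℕ) (r : Fin n → Fin n → Prop) : Prop :=
  ∃ a : Fin n → Fin d → ℝ,
    (∀ i j, i ≠ j → ∀ l, a i l ≠ a j l) ∧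
    (∀ i j, i ≠ j → (r i j ↔ ∀ l, a i l ≤ a j l))

/-- The number of partial orders on `{1,…,n}` of order dimension at most `d`. -/
noncomputable def numPosetsDimLE (d n : ℕ) : ℕ :=
  Nat.card {r : Fin n → Fin n → Prop | IsPartialOrder (Fin n) r ∧ HasOrderDimLE d n r}

def relOf {n d : ℕ} (a : Fin n → Fin d → ℝ) : Fin n → Fin n → Prop :=
  fun i j => i = j ∨ ∀ l, a i l ≤ a j l

lemma relOf_mem {n d : ℕ} (hd : 1 ≤ d) (a : Fin n → Fin d → ℝ)
    (ha : ∀ i j, i ≠ j → ∀ l, a i l ≠ a j l) :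
    IsPartialOrder (Fin n) (relOf a) ∧ HasOrderDimLE d n (relOf a) := by
  refine ⟨{ refl := fun i => Or.inl rfl, trans := ?_, antisymm := ?_ },
    a, ha, fun i j hij => by simp [relOf, hij]⟩
  · rintro i j k (rfl | h1) h2
    · exact h2
    · rcases h2 with rfl | h2
      · exact Or.inr h1
      · exact Or.inr fun l => (h1 l).trans (h2 l)
  · rintro i j h1 h2
    by_contra hne
    rcases h1 with rfl | h1; · exact hne rfl
    rcases h2 with rfl | h2; · exact hne rfl
    exact ha i j hne ⟨0, hd⟩ (le_antisymm (h1 _) (h2 _))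

noncomputable def pt (d k m : ℕ) (c : Fin m → Fin d → Fin k) :
    (Fin d × Fin k) ⊕ Fin m → Fin d → ℝ
  | Sum.inl (l, j), t =>
      if t = l then (j : ℝ) + 1 else -((j : ℝ) + 1) - ((l : ℝ) + 1) / ((d : ℝ) + 1)
  | Sum.inr i, t => (c i t : ℝ) + 1/2 + ((i : ℝ) + 1) / (4 * ((m : ℝ) + 1))

lemma top_frac_pos {m : ℕ} (i : Fin m) : 0 < ((i : ℝ) + 1) / (4 * ((m : ℝ) + 1)) := by
  positivity

lemma top_frac_lt {m : ℕ} (i : Fin m) : ((i : ℝ) + 1) / (4 * ((m : ℝ) + 1)) < 1/4 := by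
  rw [div_lt_iff₀ (by positivity)]
  have : (i : ℝ) < m := by exact_mod_cast i.isLt
  ring_nf
  nlinarith

lemma pt_bot_ne_top {d k m : ℕ} (c : Fin m → Fin d → Fin k) (l : Fin d) (j : Fin k)
    (i : Fin m) (t : Fin d) : pt d k m c (Sum.inl (l, j)) t ≠ pt d k m c (Sum.inr i) t := by
  have hs0 := top_frac_pos (m := m) i
  have hs1 := top_frac_lt (m := m) i
  simp only [pt]
  by_cases h1 : t = l
  · rw [if_pos h1]
    rcases le_or_gt ((j : ℕ) + 1) ((c i t : ℕ)) with h | h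
    · have : (j : ℝ) + 1 ≤ (c i t : ℕ) := by exact_mod_cast h
      intro hEq; linarith
    · have : ((c i t : ℕ) : ℝ) ≤ (j : ℝ) := by
        have : (c i t : ℕ) ≤ (j : ℕ) := by omega
        exact_mod_cast this
      intro hEq; linarith
  · rw [if_neg h1]
    have hpos : (0:ℝ) < ((l : ℝ) + 1) / ((d : ℝ) + 1) := by positivity
    have hc : (0:ℝ) ≤ ((c i t : ℕ) : ℝ) := by positivity
    intro hEq; linarith

lemma pt_distinct {d k m : ℕ} (c : Fin m → Fin d → Fin k) :
    ∀ x y, x ≠ y → ∀ t, pt d k m c x t ≠ pt d k m c y t := by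
  rintro (⟨l, j⟩ | i) (⟨l', j'⟩ | i') hxy t
  · -- bottom vs bottom
    simp only [pt]
    by_cases h1 : t = l <;> by_cases h2 : t = l'
    · subst h1; subst h2
      rw [if_pos rfl, if_pos rfl]
      intro hEq
      have hj : (j : ℕ) = (j' : ℕ) := by exact_mod_cast add_right_cancel hEq
      exact hxy (by rw [Fin.ext_iff.mpr hj])
    · rw [if_pos h1, if_neg h2]
      have hpos : (0:ℝ) < ((l' : ℝ) + 1) / ((d : ℝ) + 1) := by positivity
      intro hEq; have : (0:ℝ) < (j:ℝ) + 1 := by positivity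
      linarith
    · rw [if_neg h1, if_pos h2]
      have hpos : (0:ℝ) < ((l : ℝ) + 1) / ((d : ℝ) + 1) := by positivity
      intro hEq; have : (0:ℝ) < (j':ℝ) + 1 := by positivity
      linarith
    · rw [if_neg h1, if_neg h2]
      intro hEq
      have hD : ((d:ℝ) + 1) ≠ 0 := by positivity
      have key : ((j' : ℝ) - (j : ℝ)) * ((d : ℝ) + 1) = (l : ℝ) - (l' : ℝ) := by
        field_simp at hEq ⊢; linarith
      have hld : (l : ℝ) < d := by exact_mod_cast l.isLt
      have hl'd : (l' : ℝ) < d := by exact_mod_cast l'.isLt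
      have hl0 : (0:ℝ) ≤ (l : ℝ) := by positivity
      have hl'0 : (0:ℝ) ≤ (l' : ℝ) := by positivity
      rcases lt_trichotomy ((j : ℕ)) ((j' : ℕ)) with h | h | h
      · have : (j : ℝ) + 1 ≤ (j' : ℝ) := by exact_mod_cast h
        nlinarith
      · have hjr : (j : ℝ) = (j' : ℝ) := by exact_mod_cast h
        rw [hjr] at key
        have : (l : ℕ) = (l' : ℕ) := by
          have : (l : ℝ) = (l' : ℝ) := by linarith
          exact_mod_cast this
        exact hxy (by rw [Fin.ext_iff.mpr this, Fin.ext_iff.mpr h])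
      · have : (j' : ℝ) + 1 ≤ (j : ℝ) := by exact_mod_cast h
        nlinarith
  · exact pt_bot_ne_top c l j i' t
  · exact (pt_bot_ne_top c l' j' i t).symm
  · -- top vs top
    simp only [pt]
    have hs0 := top_frac_pos (m := m) i
    have hs1 := top_frac_lt (m := m) i
    have hs0' := top_frac_pos (m := m) i'
    have hs1' := top_frac_lt (m := m) i'
    rcases lt_trichotomy ((c i t : ℕ)) ((c i' t : ℕ)) with h | h | h
    · have : ((c i t : ℕ) : ℝ) + 1 ≤ ((c i' t : ℕ) : ℝ) := by exact_mod_cast h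
      intro hEq; linarith
    · have hcr : ((c i t : ℕ) : ℝ) = ((c i' t : ℕ) : ℝ) := by exact_mod_cast h
      intro hEq
      have hD : (4 * ((m:ℝ) + 1)) ≠ 0 := by positivity
      have hs : ((i : ℝ) + 1) / (4 * ((m:ℝ)+1)) = ((i' : ℝ) + 1) / (4 * ((m:ℝ)+1)) := by
        linarith
      have : (i : ℕ) = (i' : ℕ) := by
        field_simp at hs; exact_mod_cast (by linarith : ((i : ℕ) : ℝ) = ((i' : ℕ) : ℝ))
      exact hxy (by rw [Fin.ext_iff.mpr this])
    · have : ((c i' t : ℕ) : ℝ) + 1 ≤ ((c i t : ℕ) : ℝ) := by exact_mod_cast h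
      intro hEq; linarith

lemma pt_dom_iff {d k m : ℕ} (c : Fin m → Fin d → Fin k) (l : Fin d) (j : Fin k) (i : Fin m) :
    (∀ t, pt d k m c (Sum.inl (l, j)) t ≤ pt d k m c (Sum.inr i) t) ↔ (j : ℕ) < (c i l : ℕ) := by
  have hs0 := top_frac_pos (m := m) i
  have hs1 := top_frac_lt (m := m) i
  constructor
  · intro h
    have := h l
    simp only [pt, if_pos rfl, ite_true, eq_self_iff_true] at this
    have h2 : (j : ℝ) + 1 < ((c i l : ℕ) : ℝ) + 1 := by linarith
    have : (j : ℕ) + 1 < (c i l : ℕ) + 1 := by exact_mod_cast h2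
    omega
  · intro h t
    simp only [pt]
    by_cases h1 : t = l
    · rw [if_pos h1, h1]
      have : (j : ℝ) + 1 ≤ ((c i l : ℕ) : ℝ) := by exact_mod_cast h
      linarith
    · rw [if_neg h1]
      have hpos : (0:ℝ) < ((l : ℝ) + 1) / ((d : ℝ) + 1) := by positivity
      have hc : (0:ℝ) ≤ ((c i t : ℕ) : ℝ) := by positivity
      have : (0:ℝ) < (j:ℝ) + 1 := by positivity
      linarith

instance propFinite : Finite Prop := Finite.of_equiv Bool Equiv.propEquivBool.symm

lemma lower_count {d : ℕ} (hd : 1 ≤ d) (k m n : ℕ) (h : d * k + m = n) :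
    k ^ (d * m) ≤ numPosetsDimLE d n := by
  classical
  let e : (Fin d × Fin k) ⊕ Fin m ≃ Fin n :=
    (Equiv.sumCongr finProdFinEquiv (Equiv.refl (Fin m))).trans
      (finSumFinEquiv.trans (finCongr h))
  let A : (Fin m → Fin d → Fin k) → Fin n → Fin d → ℝ :=
    fun c i t => pt d k m c (e.symm i) t
  have hA : ∀ c, ∀ i j, i ≠ j → ∀ t, A c i t ≠ A c j t := by
    intro c i j hij t
    exact pt_distinct c _ _ (fun hEq => hij (by simpa using e.symm.injective hEq)) t
  let F : (Fin m → Fin d → Fin k) →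
      {r : Fin n → Fin n → Prop | IsPartialOrder (Fin n) r ∧ HasOrderDimLE d n r} :=
    fun c => ⟨relOf (A c), relOf_mem hd (A c) (hA c)⟩
  have hF : Function.Injective F := by
    intro c c' hcc
    have hr : relOf (A c) = relOf (A c') := congrArg Subtype.val hcc
    funext i t
    have key : ∀ b : Fin m → Fin d → Fin k, ∀ j : Fin k,
        relOf (A b) (e (Sum.inl (t, j))) (e (Sum.inr i)) ↔ (j : ℕ) < (b i t : ℕ) := by
      intro b j
      have hne : e (Sum.inl (t, j)) ≠ e (Sum.inr i) := by
        intro hEq; exact absurd (e.injective hEq) (by simp)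
      constructor
      · rintro (hEq | hdom)
        · exact absurd hEq hne
        · exact (pt_dom_iff b t j i).1 (by intro s; simpa [A] using hdom s)
      · intro hj
        exact Or.inr (by intro s; simpa [A] using (pt_dom_iff b t j i).2 hj s)
    have hiff : ∀ j : Fin k, (j : ℕ) < (c i t : ℕ) ↔ (j : ℕ) < (c' i t : ℕ) := by
      intro j
      rw [← key c j, ← key c' j, hr]
    apply Fin.ext
    rcases lt_trichotomy ((c i t : ℕ)) ((c' i t : ℕ)) with hlt | heq | hgt
    · exact absurd ((hiff (c i t)).2 hlt) (lt_irrefl _)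
    · exact heq
    · exact absurd ((hiff (c' i t)).1 hgt) (lt_irrefl _)
  have := Nat.card_le_card_of_injective F hF
  calc k ^ (d * m) = Nat.card (Fin m → Fin d → Fin k) := by
        simp [Nat.card_eq_fintype_card, Fintype.card_fun, ← pow_mul, mul_comm]
    _ ≤ _ := this

open Finset in
lemma rank_lt_iff {n d : ℕ} (a : Fin n → Fin d → ℝ)
    (ha : ∀ i j, i ≠ j → ∀ l, a i l ≠ a j l) (l : Fin d) (i j : Fin n) :
    (univ.filter fun x => a x l < a i l).card < (univ.filter fun x => a x l < a j l).card ↔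
      a i l < a j l := by
  classical
  have mono : ∀ p q : Fin n, a p l < a q l →
      (univ.filter fun x => a x l < a p l).card < (univ.filter fun x => a x l < a q l).card := by
    intro p q hpq
    apply Finset.card_lt_card
    rw [Finset.ssubset_iff_of_subset]
    · exact ⟨p, by simp [hpq], by simp⟩
    · intro x hx
      simp only [mem_filter, mem_univ, true_and] at hx ⊢
      exact hx.trans hpq
  constructor
  · intro hcard
    by_contra hnot
    push_neg at hnot
    rcases eq_or_lt_of_le hnot with hEq | hlt
    · rw [hEq] at hcard
      exact lt_irrefl _ hcard
    · exact absurd hcard (not_lt.2 (le_of_lt (mono j i hlt)))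
  · exact mono i j

open Finset in
lemma upper_count (d n : ℕ) (hn : 0 < n) : numPosetsDimLE d n ≤ n ^ (d * n) := by
  classical
  set S := {r : Fin n → Fin n → Prop | IsPartialOrder (Fin n) r ∧ HasOrderDimLE d n r}
  let G : S → (Fin d → Fin n → Fin n) := fun r l i =>
    ⟨(univ.filter fun x => (r.2.2.choose) x l < (r.2.2.choose) i l).card, by
      have hsub : (univ.filter fun x => (r.2.2.choose) x l < (r.2.2.choose) i l) ⊆ univ.erase i := by
        intro x hx
        simp only [mem_filter, mem_univ, true_and] at hx
        simp only [mem_erase, mem_univ, and_true]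
        intro hEq; rw [hEq] at hx; exact lt_irrefl _ hx
      calc _ ≤ (univ.erase i).card := Finset.card_le_card hsub
        _ < univ.card := Finset.card_erase_lt_of_mem (mem_univ i)
        _ = n := by simp⟩
  have hG : Function.Injective G := by
    rintro ⟨r, hr⟩ ⟨r', hr'⟩ hGr
    have spec := hr.2.choose_spec
    have spec' := hr'.2.choose_spec
    set a := hr.2.choose with ha
    set a' := hr'.2.choose with ha'
    apply Subtype.ext
    show r = r'
    funext i j
    apply propext
    by_cases hij : i = j
    · subst hij
      exact ⟨fun _ => hr'.1.refl i, fun _ => hr.1.refl i⟩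
    · rw [spec.2 i j hij, spec'.2 i j hij]
      have key : ∀ l, (a i l ≤ a j l) ↔ (a' i l ≤ a' j l) := by
        intro l
        rw [← not_lt, ← not_lt, not_iff_not, ← rank_lt_iff a spec.1 l j i,
          ← rank_lt_iff a' spec'.1 l j i]
        have h1 := congrFun (congrFun hGr l) j
        have h2 := congrFun (congrFun hGr l) i
        simp only [G] at h1 h2
        rw [Fin.ext_iff] at h1 h2
        simp only [] at h1 h2
        rw [h1, h2]
      exact forall_congr' key
  have hcard := Nat.card_le_card_of_injective G hG
  calc numPosetsDimLE d n = Nat.card S := rfl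
    _ ≤ Nat.card (Fin d → Fin n → Fin n) := hcard
    _ = n ^ (d * n) := by
        simp [Nat.card_eq_fintype_card, Fintype.card_fun, ← pow_mul, mul_comm]

lemma upper_real (d n : ℕ) (ε : ℝ) (hε : 0 < ε) (h4 : 1 ≤ n) :
    (numPosetsDimLE d n : ℝ) ≤ (n:ℝ) ^ (((d:ℝ) + ε) * n) := by
  have hn1 : (1:ℝ) ≤ n := by exact_mod_cast h4
  have hn0 : (0:ℝ) ≤ n := by linarith
  have hup := upper_count d n (by omega)
  calc (numPosetsDimLE d n : ℝ) ≤ ((n ^ (d*n) : ℕ):ℝ) := by exact_mod_cast hup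
    _ = (n:ℝ) ^ (((d*n : ℕ)):ℝ) := by
        rw [Real.rpow_natCast]; push_cast; ring
    _ ≤ (n:ℝ) ^ (((d:ℝ) + ε) * n) := by
        apply Real.rpow_le_rpow_of_exponent_le hn1
        push_cast
        nlinarith [mul_nonneg hε.le hn0]

set_option maxHeartbeats 1000000 in
lemma lower_real (d n : ℕ) (hd : 1 ≤ d) (ε : ℝ) (hε : 0 < ε) (hε1 : ε ≤ 1)
    (h1 : 4*(d:ℝ)^2/ε ≤ (n:ℝ) ^ (ε / (2*(d:ℝ)))) (h2 : 4*(d:ℝ)^2/ε ≤ (n:ℝ))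
    (h3 : 4*d ≤ n) (h4 : 1 ≤ n) :
    (n:ℝ) ^ (((d:ℝ) - ε) * n) ≤ (numPosetsDimLE d n : ℝ) := by
  have hd0 : (0:ℝ) < d := by exact_mod_cast hd
  set β : ℝ := ε / (2*(d:ℝ)) with hβdef
  have hβ : 0 < β := by positivity
  have hn1 : (1:ℝ) ≤ n := by exact_mod_cast h4
  have hnpos : (0:ℝ) < n := by linarith
  have hd1 : (1:ℝ) ≤ d := by exact_mod_cast hd
  obtain ⟨k, hklb, hkub⟩ : ∃ k : ℕ, ε * n / (4*(d:ℝ)^2) ≤ k ∧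
      (k:ℝ) < ε * n / (4*(d:ℝ)^2) + 1 :=
    ⟨⌈ε * n / (4*(d:ℝ)^2)⌉₊, Nat.le_ceil _, Nat.ceil_lt_add_one (by positivity)⟩
  have hcancel : ε * n / (4*(d:ℝ)^2) * (4*(d:ℝ)^2) = ε * n :=
    div_mul_cancel₀ _ (by positivity)
  have hk0 : (0:ℝ) ≤ k := by positivity
  have hk4 : (k:ℝ) * (4*(d:ℝ)^2) < ε * n + 4*(d:ℝ)^2 := by
    have hp : (0:ℝ) < 4*(d:ℝ)^2 := by positivity
    have := mul_lt_mul_of_pos_right hkub hp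
    rw [add_mul, one_mul, hcancel] at this
    exact this
  have hd2n : 4*(d:ℝ)^2 ≤ ε * n := by
    rw [div_le_iff₀ hε] at h2; linarith
  have ha1 : 4*(d:ℝ)^2*(k:ℝ) < 2*n := by nlinarith
  have ha2 : (d:ℝ)*k ≤ (d:ℝ)^2*k := by
    nlinarith [mul_nonneg (mul_nonneg hd0.le (by linarith : (0:ℝ) ≤ (d:ℝ) - 1)) hk0]
  have hdkn : (d:ℝ)*k < n := by nlinarith
  have hdk_le : d * k ≤ n := by
    have : ((d*k : ℕ):ℝ) < n := by push_cast; exact hdkn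
    exact_mod_cast this.le
  obtain ⟨m, hdkm⟩ : ∃ m : ℕ, d * k + m = n := ⟨n - d*k, by omega⟩
  have hm : ((m : ℕ):ℝ) = (n:ℝ) - (d:ℝ)*(k:ℝ) := by
    have : ((d * k + m : ℕ):ℝ) = (n:ℝ) := by rw [hdkm]
    push_cast at this
    linarith
  have hka : (n:ℝ)^((1:ℝ)-β) ≤ (k:ℝ) := by
    have e1 : (n:ℝ)^((1:ℝ)-β) * (n:ℝ)^β = n := by
      rw [← Real.rpow_add hnpos]; simp
    have e2 : (n:ℝ)^((1:ℝ)-β) * (4*(d:ℝ)^2/ε) ≤ (n:ℝ)^((1:ℝ)-β) * (n:ℝ)^β :=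
      mul_le_mul_of_nonneg_left h1 (Real.rpow_nonneg (by positivity) _)
    have e3 : (n:ℝ)^((1:ℝ)-β) * (4*(d:ℝ)^2/ε) ≤ n := by linarith
    have e4 : (n:ℝ)^((1:ℝ)-β) ≤ ε * n / (4*(d:ℝ)^2) := by
      rw [le_div_iff₀ (by positivity)]
      calc (n:ℝ)^((1:ℝ)-β) * (4*(d:ℝ)^2) = (n:ℝ)^((1:ℝ)-β) * (4*(d:ℝ)^2/ε) * ε := by
            field_simp
        _ ≤ n * ε := mul_le_mul_of_nonneg_right e3 hε.le
        _ = ε * n := by ring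
    exact e4.trans hklb
  have hd2k : (d:ℝ)^2 * k ≤ ε * n / 2 := by nlinarith
  have hβd : β * d = ε / 2 := by
    rw [hβdef]; field_simp
  have hdk0 : (0:ℝ) ≤ (d:ℝ) * k := by positivity
  have e5 : β*((d:ℝ)*n) = ε/2 * n := by rw [← mul_assoc, hβd]
  have e6 : β*((d:ℝ)*((d:ℝ)*k)) = ε/2*((d:ℝ)*k) := by rw [← mul_assoc, hβd]
  have hexp : ((d:ℝ) - ε) * n ≤ (1 - β) * ((d * m : ℕ):ℝ) := by
    have hcast : ((d * m : ℕ):ℝ) = (d:ℝ) * ((n:ℝ) - (d:ℝ)*k) := by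
      push_cast; rw [hm]
    have expand : (1-β)*((d:ℝ)*((n:ℝ)-(d:ℝ)*k)) =
        (d:ℝ)*n - (d:ℝ)^2*k - β*((d:ℝ)*n) + β*((d:ℝ)*((d:ℝ)*k)) := by ring
    have h0 : (0:ℝ) ≤ ε/2*((d:ℝ)*k) := mul_nonneg (by positivity) hdk0
    rw [hcast, expand, e5, e6]
    linarith
  calc (n:ℝ) ^ (((d:ℝ) - ε) * n) ≤ (n:ℝ) ^ ((1 - β) * ((d * m : ℕ):ℝ)) :=
        Real.rpow_le_rpow_of_exponent_le hn1 hexp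
    _ = ((n:ℝ) ^ ((1:ℝ)-β)) ^ (d * m : ℕ) := by
        rw [Real.rpow_mul (by positivity), Real.rpow_natCast]
    _ ≤ (k:ℝ) ^ (d * m : ℕ) :=
        pow_le_pow_left₀ (Real.rpow_nonneg (by positivity) _) hka _
    _ = ((k ^ (d * m) : ℕ):ℝ) := by push_cast; ring
    _ ≤ (numPosetsDimLE d n : ℝ) := by
        exact_mod_cast lower_count hd k m n hdkm

open Filter

/-- **Corollary 2.12 (Alon–Scheinerman).** For every fixed `d ≥ 1`, the number of
partial orders on `{1,…,n}` of order dimension at most `d` equals `n^{(d+o(1))n}`: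
for every `ε > 0` it is eventually between `n^{(d-ε)n}` and `n^{(d+ε)n}`. -/
theorem count_posets_of_dim_le (d : ℕ) (hd : 1 ≤ d) :
    ∀ ε : ℝ, 0 < ε → ∃ N : ℕ, ∀ n : ℕ, N ≤ n →
      (n : ℝ) ^ (((d : ℝ) - ε) * n) ≤ (numPosetsDimLE d n : ℝ) ∧
      (numPosetsDimLE d n : ℝ) ≤ (n : ℝ) ^ (((d : ℝ) + ε) * n) := by
  suffices H : ∀ ε : ℝ, 0 < ε → ε ≤ 1 → ∃ N : ℕ, ∀ n : ℕ, N ≤ n → 1 ≤ n ∧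
      ((n : ℝ) ^ (((d : ℝ) - ε) * n) ≤ (numPosetsDimLE d n : ℝ) ∧
      (numPosetsDimLE d n : ℝ) ≤ (n : ℝ) ^ (((d : ℝ) + ε) * n)) by
    intro ε hε
    obtain ⟨N, hN⟩ := H (min ε 1) (lt_min hε one_pos) (min_le_right _ _)
    refine ⟨N, fun n hn => ?_⟩
    obtain ⟨hn1, hlow, hup⟩ := hN n hn
    have hn1' : (1:ℝ) ≤ n := by exact_mod_cast hn1
    have hminε : min ε 1 ≤ ε := min_le_left _ _
    have hn0 : (0:ℝ) ≤ n := by positivity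
    constructor
    · refine le_trans (Real.rpow_le_rpow_of_exponent_le hn1' ?_) hlow
      nlinarith
    · refine le_trans hup (Real.rpow_le_rpow_of_exponent_le hn1' ?_)
      nlinarith
  intro ε hε hε1
  have hd0 : (0:ℝ) < d := by exact_mod_cast hd
  have hβ : 0 < ε / (2*(d:ℝ)) := by positivity
  have main : ∀ᶠ n : ℕ in atTop, 1 ≤ n ∧
      ((n : ℝ) ^ (((d : ℝ) - ε) * n) ≤ (numPosetsDimLE d n : ℝ) ∧
      (numPosetsDimLE d n : ℝ) ≤ (n : ℝ) ^ (((d : ℝ) + ε) * n)) := by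
    have E1 : ∀ᶠ n : ℕ in atTop, (4*(d:ℝ)^2/ε) ≤ (n:ℝ) ^ (ε / (2*(d:ℝ))) :=
      ((tendsto_rpow_atTop hβ).comp tendsto_natCast_atTop_atTop).eventually_ge_atTop _
    have E2 : ∀ᶠ n : ℕ in atTop, (4*(d:ℝ)^2/ε) ≤ (n:ℝ) :=
      tendsto_natCast_atTop_atTop.eventually_ge_atTop _
    filter_upwards [E1, E2, eventually_ge_atTop (4*d), eventually_ge_atTop 1]
      with n h1 h2 h3 h4
    exact ⟨h4, lower_real d n hd ε hε hε1 h1 h2 h3 h4, upper_real d n ε hε h4⟩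
  obtain ⟨N, hN⟩ := eventually_atTop.1 main
  exact ⟨N, hN⟩
end

section
/- Let P(x,y,r,x',y',r') = (x−x')² + (y−y')² − (r+r')² and U = {(x,y,r) ∈ ℝ³ : r > 0}. For any two distinct points a = (x,y,r) and a' = (x',y',r') in U, there exists b = (x*,y*,r*) ∈ U such that P(a,b) ≠ 0, P(a',b) ≠ 0, and exactly one of P(a,b) < 0 and P(a',b) < 0 holds. -/
/-- Auxiliary construction: if `r' < D + r` (disk 2 does not engulf disk 1 too much),
place a small disk inside disk 1 on the far side from disk 2. -/
lemma separating_disk_aux (x y r x' y' r' D ux uy : ℝ) (hr : 0 < r) (hr' : 0 < r')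
    (hD0 : 0 ≤ D) (hu : ux ^ 2 + uy ^ 2 = 1)
    (hdx : x - x' = D * ux) (hdy : y - y' = D * uy) (hc : r' < D + r) :
    ∃ xs ys rs : ℝ, 0 < rs ∧
      (x - xs) ^ 2 + (y - ys) ^ 2 - (r + rs) ^ 2 < 0 ∧
      0 < (x' - xs) ^ 2 + (y' - ys) ^ 2 - (r' + rs) ^ 2 := by
  set rs := min ((D + r - r') / 4) (r / 2) with hrs_def
  have hrs0 : 0 < rs := lt_min (by linarith) (by linarith)
  have hrs1 : rs ≤ (D + r - r') / 4 := min_le_left _ _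
  have hrs2 : rs ≤ r / 2 := min_le_right _ _
  set t := r - rs with ht_def
  have ht0 : 0 < t := by simp only [ht_def]; linarith
  refine ⟨x + t * ux, y + t * uy, rs, hrs0, ?_, ?_⟩
  · have e1 : (x - (x + t * ux)) ^ 2 + (y - (y + t * uy)) ^ 2 = t ^ 2 := by
      linear_combination t ^ 2 * hu
    rw [e1]
    nlinarith [hrs0, ht0]
  · have hx' : x' = x - D * ux := by linarith
    have hy' : y' = y - D * uy := by linarith
    have e2 : (x' - (x + t * ux)) ^ 2 + (y' - (y + t * uy)) ^ 2 = (D + t) ^ 2 := by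
      rw [hx', hy']; linear_combination (D + t) ^ 2 * hu
    rw [e2]
    nlinarith [hrs0, hrs1, ht0, hr', hD0]

/-- **Separating disk condition** (Section 2.1). Let
`P(x,y,r,x*,y*,r*) = (x-x*)² + (y-y*)² - (r+r*)²` and
`U = {(x,y,r) : r > 0}`. For any two distinct points `(x,y,r), (x',y',r') ∈ U` there
is `(x*,y*,r*) ∈ U` with `P((x,y,r),(x*,y*,r*)) ≠ 0`, `P((x',y',r'),(x*,y*,r*)) ≠ 0`,
and exactly one of `P((x,y,r),(x*,y*,r*)) < 0` and `P((x',y',r'),(x*,y*,r*)) < 0`: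
there is an open disk intersecting exactly one of two given distinct open disks,
tangent to neither. -/
theorem separating_disk_exists (x y r x' y' r' : ℝ) (hr : 0 < r) (hr' : 0 < r')
    (hne : (x, y, r) ≠ (x', y', r')) :
    ∃ xs ys rs : ℝ, 0 < rs ∧
      (x - xs) ^ 2 + (y - ys) ^ 2 - (r + rs) ^ 2 ≠ 0 ∧
      (x' - xs) ^ 2 + (y' - ys) ^ 2 - (r' + rs) ^ 2 ≠ 0 ∧
      Xor' ((x - xs) ^ 2 + (y - ys) ^ 2 - (r + rs) ^ 2 < 0)
        ((x' - xs) ^ 2 + (y' - ys) ^ 2 - (r' + rs) ^ 2 < 0) := by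
  set D := Real.sqrt ((x - x') ^ 2 + (y - y') ^ 2) with hD_def
  have hD0 : 0 ≤ D := Real.sqrt_nonneg _
  have hD2 : D ^ 2 = (x - x') ^ 2 + (y - y') ^ 2 := Real.sq_sqrt (by positivity)
  set ux := if D = 0 then (1 : ℝ) else (x - x') / D with hux_def
  set uy := if D = 0 then (0 : ℝ) else (y - y') / D with huy_def
  have hu : ux ^ 2 + uy ^ 2 = 1 := by
    by_cases h : D = 0
    · simp [hux_def, huy_def, h]
    · simp only [hux_def, huy_def, if_neg h]
      field_simp
      linarith [hD2]
  have hdxy : x - x' = D * ux ∧ y - y' = D * uy := by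
    by_cases h : D = 0
    · have h0 : (x - x') ^ 2 + (y - y') ^ 2 = 0 := by rw [← hD2, h]; ring
      rw [h, zero_mul, zero_mul]
      constructor
      · nlinarith [sq_nonneg (x - x'), sq_nonneg (y - y')]
      · nlinarith [sq_nonneg (x - x'), sq_nonneg (y - y')]
    · simp only [hux_def, huy_def, if_neg h]
      constructor <;> field_simp
  obtain ⟨hdx, hdy⟩ := hdxy
  by_cases hc : r' < D + r
  · obtain ⟨xs, ys, rs, h1, h2, h3⟩ :=
      separating_disk_aux x y r x' y' r' D ux uy hr hr' hD0 hu hdx hdy hc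
    exact ⟨xs, ys, rs, h1, ne_of_lt h2, ne_of_gt h3,
      Or.inl ⟨h2, by linarith⟩⟩
  · have hc' : r < D + r' := by
      by_contra hc2
      push_neg at hc hc2
      have hDz : D = 0 := le_antisymm (by linarith) hD0
      have hrr : r = r' := by linarith
      have h0 : (x - x') ^ 2 + (y - y') ^ 2 = 0 := by rw [← hD2, hDz]; ring
      have hxx : x = x' := by nlinarith [sq_nonneg (x - x'), sq_nonneg (y - y')]
      have hyy : y = y' := by nlinarith [sq_nonneg (x - x'), sq_nonneg (y - y')]
      exact hne (by rw [hxx, hyy, hrr])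
    obtain ⟨xs, ys, rs, h1, h2, h3⟩ :=
      separating_disk_aux x' y' r' x y r D (-ux) (-uy) hr' hr hD0
        (by linear_combination hu) (by linarith) (by linarith) hc'
    exact ⟨xs, ys, rs, h1, ne_of_gt h3, ne_of_lt h2,
      Or.inr ⟨h2, by linarith⟩⟩
end

section
/- Let U ⊆ ℝᵈ be open, let Q, R ∈ ℝ[y₁,…,y_d] be coprime nonconstant polynomials whose common zero set Z = {y ∈ ℝᵈ : Q(y) = R(y) = 0} is a real algebraic set of dimension at most d − 2, let U' ⊆ ℝᵈ be an open ball, and let f : U' → ℝ be a continuous function such that Q(b') = R(b') = 0 for every b' ∈ U' with f(b') = 0. If there exist b⁺, b⁻ ∈ U' with f(b⁺) > 0, Q(b⁺) ≠ 0, f(b⁻) < 0 and Q(b⁻) ≠ 0, then a contradiction arises; i.e., no such b⁺, b⁻ can both exist. -/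
/-- The vanishing ideal `I(V)` of a subset `V ⊆ ℝ^σ`. -/
noncomputable def vanishingIdeal {σ : Type} (V : Set (σ → ℝ)) :
    Ideal (MvPolynomial σ ℝ) where
  carrier := {Q | ∀ x ∈ V, MvPolynomial.eval x Q = 0}
  add_mem' := by
    intro a b ha hb x hx
    simp [map_add, ha x hx, hb x hx]
  zero_mem' := by
    intro x hx
    simp
  smul_mem' := by
    intro c q hq x hx
    simp [smul_eq_mul, hq x hx]

/-- The dimension of a real algebraic set: the Krull dimension of the quotient of the
polynomial ring by the vanishing ideal (`⊥` for the empty set). -/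
noncomputable def algSetDim {σ : Type} (V : Set (σ → ℝ)) : WithBot ℕ∞ :=
  ringKrullDim (MvPolynomial σ ℝ ⧸ vanishingIdeal V)



set_option maxHeartbeats 1000000
set_option synthInstance.maxHeartbeats 100000

namespace NSC
open Polynomial

variable {d : ℕ}

noncomputable def thB (a : Fin d → ℝ) :
    MvPolynomial (Fin d) ℝ →+* Polynomial (MvPolynomial (Fin d) ℝ) :=
  MvPolynomial.eval₂Hom (Polynomial.C.comp MvPolynomial.C)
    (fun i => Polynomial.C (MvPolynomial.X i) * Polynomial.X +
      Polynomial.C (MvPolynomial.C (a i)))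

noncomputable def Th (a : Fin d → ℝ) :
    Polynomial (MvPolynomial (Fin d) ℝ) →+* Polynomial (MvPolynomial (Fin d) ℝ) :=
  Polynomial.eval₂RingHom (thB a) Polynomial.X

noncomputable abbrev MM (d : ℕ) := FractionRing (Polynomial (MvPolynomial (Fin d) ℝ))

noncomputable def iM : Polynomial (MvPolynomial (Fin d) ℝ) →+* MM d := algebraMap _ _

lemma iM_inj : Function.Injective (iM (d := d)) := IsFractionRing.injective _ _

noncomputable def btB (a : Fin d → ℝ) : MvPolynomial (Fin d) ℝ →+* MM d :=
  MvPolynomial.eval₂Hom (iM.comp (Polynomial.C.comp MvPolynomial.C))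
    (fun i => (iM (Polynomial.C (MvPolynomial.X i)) -
        iM (Polynomial.C (MvPolynomial.C (a i)))) * (iM Polynomial.X)⁻¹)

noncomputable def bt (a : Fin d → ℝ) :
    Polynomial (MvPolynomial (Fin d) ℝ) →+* MM d :=
  Polynomial.eval₂RingHom (btB a) (iM Polynomial.X)

lemma iM_X_ne : (iM (Polynomial.X) : MM d) ≠ 0 := by
  intro h
  have h2 : iM (Polynomial.X : Polynomial (MvPolynomial (Fin d) ℝ)) = iM 0 := by
    simpa using h
  exact Polynomial.X_ne_zero (iM_inj h2)

lemma Th_X (a : Fin d → ℝ) : Th a Polynomial.X = Polynomial.X := by simp [Th]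

lemma bt_X (a : Fin d → ℝ) : bt a Polynomial.X = iM Polynomial.X := by simp [bt]

lemma bt_C (a : Fin d → ℝ) (b : MvPolynomial (Fin d) ℝ) :
    bt a (Polynomial.C b) = btB a b := by
  simp [bt]

lemma bt_comp_thB (a : Fin d → ℝ) :
    (bt a).comp (thB a) = iM.comp Polynomial.C := by
  apply MvPolynomial.ringHom_ext
  · intro r
    simp [bt, thB, iM, btB]
  · intro i
    simp only [RingHom.comp_apply, thB, MvPolynomial.eval₂Hom_X', bt, map_add, map_mul,
      Polynomial.coe_eval₂RingHom, Polynomial.eval₂_C, Polynomial.eval₂_X, Polynomial.eval₂_add,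
      Polynomial.eval₂_mul, btB]
    rw [inv_mul_cancel_right₀ iM_X_ne]
    simp

lemma bt_comp_Th (a : Fin d → ℝ) : (bt a).comp (Th a) = iM := by
  apply Polynomial.ringHom_ext
  · intro b
    have := RingHom.congr_fun (bt_comp_thB a) b
    simpa [Th, bt] using this
  · simp [Th, bt]

lemma Th_inj (a : Fin d → ℝ) : Function.Injective (Th a) := by
  have h : Function.Injective ((bt a).comp (Th a)) := by
    rw [bt_comp_Th]; exact iM_inj
  exact Function.Injective.of_comp h

noncomputable def That (a : Fin d → ℝ) : MM d →+* MM d :=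
  IsFractionRing.lift (g := iM.comp (Th a)) (iM_inj.comp (Th_inj a))

lemma That_iM (a : Fin d → ℝ) (x) : That a (iM x) = iM (Th a x) :=
  IsFractionRing.lift_algebraMap _ _

lemma That_comp_bt (a : Fin d → ℝ) : (That a).comp (bt a) = iM := by
  apply Polynomial.ringHom_ext
  · intro b
    rw [RingHom.comp_apply, bt_C]
    induction b using MvPolynomial.induction_on with
    | C r => simp [btB, That_iM, Th, thB]
    | add p q hp hq => simp only [map_add, hp, hq]
    | mul_X p i hp =>
      rw [map_mul, map_mul, hp]
      congr 1
      simp only [btB, MvPolynomial.eval₂Hom_X', map_mul, map_sub, map_inv₀, That_iM]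
      have h1 : Th a (Polynomial.C (MvPolynomial.X i)) =
          Polynomial.C (MvPolynomial.X i) * Polynomial.X +
            Polynomial.C (MvPolynomial.C (a i)) := by
        simp [Th, thB]
      have h2 : Th a (Polynomial.C (MvPolynomial.C (a i))) =
          Polynomial.C (MvPolynomial.C (a i)) := by
        simp [Th, thB]
      rw [Th_X, h1, h2, map_add, map_mul]
      field_simp
      rw [add_sub_cancel_right, ← mul_assoc, mul_div_cancel_right₀ _ iM_X_ne]
  · rw [RingHom.comp_apply]
    have : bt a Polynomial.X = iM Polynomial.X := by simp [bt]
    rw [this, That_iM]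
    simp [Th]

lemma bt_inj (a : Fin d → ℝ) : Function.Injective (bt a) := by
  have h : Function.Injective ((That a) ∘ (bt a)) := by
    rw [← RingHom.coe_comp, That_comp_bt]; exact iM_inj
  exact Function.Injective.of_comp h

/-- denominator bound: every `bt a x` is `iM y / t^n`. -/
lemma bt_denom (a : Fin d → ℝ) (x : Polynomial (MvPolynomial (Fin d) ℝ)) :
    ∃ (n : ℕ) (y : Polynomial (MvPolynomial (Fin d) ℝ)),
      (iM Polynomial.X)^n * bt a x = iM y := by
  induction x using Polynomial.induction_on with
  | C b =>
    rw [bt_C]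
    induction b using MvPolynomial.induction_on with
    | C r => exact ⟨0, Polynomial.C (MvPolynomial.C r), by simp [btB]⟩
    | add p q hp hq =>
      obtain ⟨n1, y1, h1⟩ := hp
      obtain ⟨n2, y2, h2⟩ := hq
      refine ⟨n1 + n2, Polynomial.X ^ n2 * y1 + Polynomial.X ^ n1 * y2, ?_⟩
      rw [map_add, map_add, map_mul, map_mul, map_pow, map_pow, ← h1, ← h2]
      ring
    | mul_X p i hp =>
      obtain ⟨n1, y1, h1⟩ := hp
      refine ⟨n1 + 1, y1 * (Polynomial.C (MvPolynomial.X i) -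
        Polynomial.C (MvPolynomial.C (a i))), ?_⟩
      have hsplit : btB a (p * MvPolynomial.X i) = btB a p *
          ((iM (Polynomial.C (MvPolynomial.X i)) -
            iM (Polynomial.C (MvPolynomial.C (a i)))) * (iM Polynomial.X)⁻¹) := by
        simp [btB]
      rw [hsplit]
      have hr : iM (y1 * (Polynomial.C (MvPolynomial.X i) -
          Polynomial.C (MvPolynomial.C (a i)))) = iM y1 *
          (iM (Polynomial.C (MvPolynomial.X i)) -
            iM (Polynomial.C (MvPolynomial.C (a i)))) := by
        rw [map_mul, map_sub]
      rw [hr, ← h1]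
      calc (iM Polynomial.X)^(n1+1) * (btB a p *
            ((iM (Polynomial.C (MvPolynomial.X i)) -
              iM (Polynomial.C (MvPolynomial.C (a i)))) * (iM Polynomial.X)⁻¹))
          = ((iM Polynomial.X)^n1 * btB a p) *
            ((iM (Polynomial.C (MvPolynomial.X i)) -
              iM (Polynomial.C (MvPolynomial.C (a i)))) * (iM Polynomial.X)⁻¹ *
              iM Polynomial.X) := by ring
        _ = _ := by rw [inv_mul_cancel_right₀ iM_X_ne]
  | add p q hp hq =>
    obtain ⟨n1, y1, h1⟩ := hp
    obtain ⟨n2, y2, h2⟩ := hq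
    refine ⟨n1 + n2, Polynomial.X ^ n2 * y1 + Polynomial.X ^ n1 * y2, ?_⟩
    rw [map_add, map_add, map_mul, map_mul, map_pow, map_pow, ← h1, ← h2]
    ring
  | monomial n b hp =>
    obtain ⟨n1, y1, h1⟩ := hp
    refine ⟨n1, y1 * Polynomial.X, ?_⟩
    have hstep : bt a (Polynomial.C b * Polynomial.X ^ (n + 1)) =
        bt a (Polynomial.C b * Polynomial.X ^ n) * iM Polynomial.X := by
      rw [pow_succ, ← mul_assoc, map_mul, bt_X]
    rw [hstep]
    have hr : iM (y1 * Polynomial.X) = iM y1 * iM Polynomial.X := map_mul _ _ _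
    rw [hr, ← h1]
    ring

end NSC

namespace NSC
open Polynomial

variable {d : ℕ}

lemma dvd_of_dvd_pow_mul {α : Type*} [CommMonoidWithZero α] [IsCancelMulZero α] {p h c : α}
    (hp : Prime p) (hnd : ¬ p ∣ h) : ∀ n : ℕ, h ∣ p ^ n * c → h ∣ c := by
  intro n
  induction n with
  | zero => simpa using id
  | succ n ih =>
    rintro ⟨u, hu⟩
    have hpu : p ∣ h * u := by
      rw [← hu]
      exact dvd_mul_of_dvd_left (dvd_pow_self p n.succ_ne_zero) c
    rcases hp.dvd_mul.mp hpu with h1 | h2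
    · exact absurd h1 hnd
    obtain ⟨u', rfl⟩ := h2
    apply ih
    refine ⟨u', ?_⟩
    have : p * (p ^ n * c) = p * (h * u') := by
      rw [← mul_assoc, ← pow_succ', hu, mul_left_comm]
    exact mul_left_cancel₀ hp.ne_zero this

lemma strip_X (x : Polynomial (MvPolynomial (Fin d) ℝ)) (hx : x ≠ 0) :
    ∃ (j : ℕ) (y : Polynomial (MvPolynomial (Fin d) ℝ)),
      x = Polynomial.X ^ j * y ∧ ¬ (Polynomial.X ∣ y) := by
  obtain ⟨n, hn⟩ : ∃ n, x.natDegree = n := ⟨_, rfl⟩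
  induction n using Nat.strong_induction_on generalizing x with
  | _ n ih =>
  by_cases hdvd : (Polynomial.X : Polynomial (MvPolynomial (Fin d) ℝ)) ∣ x
  · obtain ⟨x', rfl⟩ := hdvd
    have hx' : x' ≠ 0 := by rintro rfl; simp at hx
    have hdeg : x'.natDegree < n := by
      subst hn
      rw [Polynomial.natDegree_mul Polynomial.X_ne_zero hx', Polynomial.natDegree_X]
      omega
    obtain ⟨j, y, hy, hnd⟩ := ih x'.natDegree hdeg x' hx' rfl
    exact ⟨j + 1, y, by rw [hy]; ring, hnd⟩
  · exact ⟨0, x, by simp, hdvd⟩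

/-- Core: any common divisor of `Q(a+tv)` and `R(a+tv)` in `B[t]` is a unit,
provided `Q(a) ≠ 0` and `Q, R` are coprime. -/
lemma isRelPrime_thB (a : Fin d → ℝ) (Q R : MvPolynomial (Fin d) ℝ)
    (hQa : MvPolynomial.eval a Q ≠ 0)
    (hcop : ∀ S : MvPolynomial (Fin d) ℝ, S ∣ Q → S ∣ R → IsUnit S) :
    IsRelPrime (thB a Q) (thB a R) := by
  intro h₀ hdq hdr
  -- notation
  set q := thB a Q with hq
  set r := thB a R with hr
  have hQ0 : Q ≠ 0 := by rintro rfl; simp at hQa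
  -- q has nonzero constant coefficient
  have hev0 : ∀ F : MvPolynomial (Fin d) ℝ, Polynomial.eval 0 (thB a F) =
      MvPolynomial.C (MvPolynomial.eval a F) := by
    intro F
    have : (Polynomial.evalRingHom (0 : MvPolynomial (Fin d) ℝ)).comp (thB a) =
        (MvPolynomial.C : ℝ →+* MvPolynomial (Fin d) ℝ).comp (MvPolynomial.eval a) := by
      apply MvPolynomial.ringHom_ext
      · intro s; simp [thB]
      · intro i; simp [thB]
    exact RingHom.congr_fun this F
  have hXq : ¬ (Polynomial.X ∣ q) := by
    rw [Polynomial.X_dvd_iff]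
    rw [Polynomial.coeff_zero_eq_eval_zero, hq, hev0]
    simpa using hQa
  have hq0 : q ≠ 0 := by rintro h; rw [h] at hXq; exact hXq (dvd_zero _)
  have hh0 : h₀ ≠ 0 := by rintro rfl; exact hq0 (zero_dvd_iff.mp hdq)
  -- push through bt
  obtain ⟨s, hs⟩ := hdq
  obtain ⟨s', hs'⟩ := hdr
  obtain ⟨nh, ht, hht⟩ := bt_denom a h₀
  obtain ⟨ns, st, hst⟩ := bt_denom a s
  obtain ⟨ns', st', hst'⟩ := bt_denom a s'
  have hbtq : bt a q = iM (Polynomial.C Q) := RingHom.congr_fun (bt_comp_thB a) Q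
  have hbtr : bt a r = iM (Polynomial.C R) := RingHom.congr_fun (bt_comp_thB a) R
  have keyQ : Polynomial.X ^ (nh + ns) * Polynomial.C Q = ht * st := by
    apply iM_inj
    rw [map_mul, map_mul, map_pow, ← hht, ← hst, ← hbtq, hs, map_mul]
    ring
  have keyR : Polynomial.X ^ (nh + ns') * Polynomial.C R = ht * st' := by
    apply iM_inj
    rw [map_mul, map_mul, map_pow, ← hht, ← hst', ← hbtr, hs', map_mul]
    ring
  have hht0 : ht ≠ 0 := by
    rintro rfl
    rw [map_zero] at hht
    have : bt a h₀ = 0 := by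
      have := mul_eq_zero.mp hht.symm.symm
      rcases mul_eq_zero.mp hht with h1 | h2
      · exact absurd h1 (pow_ne_zero _ iM_X_ne)
      · exact h2
    exact hh0 (bt_inj a (by simpa using this))
  obtain ⟨j, h₂, hstrip, hXh₂⟩ := strip_X ht hht0
  have hprimeX : Prime (Polynomial.X : Polynomial (MvPolynomial (Fin d) ℝ)) :=
    Polynomial.prime_X
  have hdQ : h₂ ∣ Polynomial.C Q := by
    apply dvd_of_dvd_pow_mul hprimeX hXh₂ (nh + ns)
    rw [keyQ, hstrip]; exact ⟨Polynomial.X ^ j * st, by ring⟩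
  have hdR : h₂ ∣ Polynomial.C R := by
    apply dvd_of_dvd_pow_mul hprimeX hXh₂ (nh + ns')
    rw [keyR, hstrip]; exact ⟨Polynomial.X ^ j * st', by ring⟩
  -- h₂ is a constant polynomial C p with p ∣ Q, p ∣ R
  have hCQ0 : (Polynomial.C Q : Polynomial (MvPolynomial (Fin d) ℝ)) ≠ 0 := by
    simpa using hQ0
  have hdeg2 : h₂.natDegree = 0 := by
    have := Polynomial.natDegree_le_of_dvd hdQ hCQ0
    simpa using this
  obtain ⟨p, hp⟩ : ∃ p, h₂ = Polynomial.C p :=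
    ⟨h₂.coeff 0, Polynomial.eq_C_of_natDegree_eq_zero hdeg2⟩
  have habs : ∀ F : MvPolynomial (Fin d) ℝ, h₂ ∣ Polynomial.C F → p ∣ F := by
    intro F hdF
    by_cases hF : F = 0
    · rw [hF]; exact dvd_zero p
    obtain ⟨u, hu⟩ := hdF
    have hCp0 : h₂ ≠ 0 := by rintro rfl; exact hXh₂ (dvd_zero _)
    have hu0' : u ≠ 0 := by
      rintro rfl; rw [mul_zero] at hu
      exact hF (Polynomial.C_injective (by simpa using hu :
        Polynomial.C F = Polynomial.C (0 : MvPolynomial (Fin d) ℝ)))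
    have hu0 : u.natDegree = 0 := by
      have := congrArg Polynomial.natDegree hu
      rw [Polynomial.natDegree_mul hCp0 hu0', hdeg2] at this
      simpa using this.symm
    obtain ⟨w, hw⟩ : ∃ w, u = Polynomial.C w :=
      ⟨u.coeff 0, Polynomial.eq_C_of_natDegree_eq_zero hu0⟩
    refine ⟨w, ?_⟩
    have : Polynomial.C F = Polynomial.C (p * w) := by rw [hu, hp, hw, map_mul]
    exact Polynomial.C_injective this
  have hpQ : p ∣ Q := habs Q hdQ
  have hpR : p ∣ R := habs R hdR
  have hpu : IsUnit p := hcop p hpQ hpR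
  -- so h₂ is a unit, and ht = X^j * unit
  have hh₂u : IsUnit h₂ := by rw [hp]; exact hpu.map Polynomial.C
  -- transfer back: X^nh * h₀ = X^j * (Th a h₂)
  have hThh₂ : IsUnit (Th a h₂) := hh₂u.map (Th a)
  have hback : Polynomial.X ^ nh * h₀ = Polynomial.X ^ j * Th a h₂ := by
    apply iM_inj
    have hTb : That a (bt a h₀) = iM h₀ := by
      have hc := RingHom.congr_fun (That_comp_bt a) h₀
      simpa using hc
    have h1 : That a (iM Polynomial.X ^ nh * bt a h₀) = iM (Polynomial.X ^ nh * h₀) := by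
      rw [map_mul, map_pow, That_iM, hTb, map_mul, map_pow, Th_X]
    have h2 : That a (iM ht) = iM (Th a ht) := That_iM a ht
    rw [← h1, hht, h2, hstrip, map_mul, map_pow, Th_X, map_mul, map_pow]
  -- conclude h₀ is a unit
  rcases le_or_gt j nh with hle | hlt
  · -- X^(nh - j) * h₀ = Th a h₂  (unit), so nh = j and h₀ unit
    have : Polynomial.X ^ j * (Polynomial.X ^ (nh - j) * h₀) =
        Polynomial.X ^ j * Th a h₂ := by
      rw [← hback, ← mul_assoc, ← pow_add]
      congr 2
      omega
    have hcanc : Polynomial.X ^ (nh - j) * h₀ = Th a h₂ :=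
      mul_left_cancel₀ (pow_ne_zero _ Polynomial.X_ne_zero) this
    rcases Nat.eq_or_lt_of_le hle with heq | hlt2
    · rw [heq, Nat.sub_self, pow_zero, one_mul] at hcanc
      rw [hcanc]; exact hThh₂
    · exfalso
      have : (Polynomial.X : Polynomial (MvPolynomial (Fin d) ℝ)) ∣ Th a h₂ := by
        rw [← hcanc]
        exact Dvd.dvd.mul_right (dvd_pow_self _ (by omega)) h₀
      exact hprimeX.not_unit (isUnit_of_dvd_unit this hThh₂)
  · -- h₀ = X^(j-nh) * unit, but X ∤ h₀ since X ∤ q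
    exfalso
    have hXh₀ : ¬ (Polynomial.X ∣ h₀) := fun hd => hXq (hd.trans ⟨s, hs⟩)
    have : Polynomial.X ^ nh * h₀ = Polynomial.X ^ nh *
        (Polynomial.X ^ (j - nh) * Th a h₂) := by
      rw [hback, ← mul_assoc, ← pow_add]
      congr 2
      omega
    have hcanc := mul_left_cancel₀ (pow_ne_zero nh (Polynomial.X_ne_zero
      (R := MvPolynomial (Fin d) ℝ))) this
    exact hXh₀ (by rw [hcanc]; exact Dvd.dvd.mul_right (dvd_pow_self _ (by omega)) _)

end NSC

namespace NSC
open Polynomial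

variable {d : ℕ}

noncomputable abbrev KK (d : ℕ) := FractionRing (MvPolynomial (Fin d) ℝ)

lemma thB_eval_zero (a : Fin d → ℝ) (F : MvPolynomial (Fin d) ℝ) :
    Polynomial.eval 0 (thB a F) = MvPolynomial.C (MvPolynomial.eval a F) := by
  have : (Polynomial.evalRingHom (0 : MvPolynomial (Fin d) ℝ)).comp (thB a) =
      (MvPolynomial.C : ℝ →+* MvPolynomial (Fin d) ℝ).comp (MvPolynomial.eval a) := by
    apply MvPolynomial.ringHom_ext
    · intro s; simp [thB]
    · intro i; simp [thB]
  exact RingHom.congr_fun this F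

lemma thB_injective (a : Fin d → ℝ) : Function.Injective (thB a) := by
  have hcomp : (MvPolynomial.eval₂Hom (MvPolynomial.C (σ := Fin d) (R := ℝ))
      (fun i => MvPolynomial.X i - MvPolynomial.C (a i))).comp
      ((Polynomial.evalRingHom (1 : MvPolynomial (Fin d) ℝ)).comp (thB a)) =
      RingHom.id _ := by
    apply MvPolynomial.ringHom_ext
    · intro s; simp [thB]
    · intro i; simp [thB]
  intro x y h
  have h2 := RingHom.congr_fun hcomp x
  have h3 := RingHom.congr_fun hcomp y
  simp only [RingHom.comp_apply, RingHom.id_apply] at h2 h3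
  rw [← h2, ← h3, h]

lemma isCoprime_map_thB (a : Fin d → ℝ) (Q R : MvPolynomial (Fin d) ℝ)
    (hQa : MvPolynomial.eval a Q ≠ 0) (hR0 : R ≠ 0)
    (hcop : ∀ S : MvPolynomial (Fin d) ℝ, S ∣ Q → S ∣ R → IsUnit S) :
    IsCoprime ((thB a Q).map (algebraMap (MvPolynomial (Fin d) ℝ) (KK d)))
      ((thB a R).map (algebraMap (MvPolynomial (Fin d) ℝ) (KK d))) := by
  letI : StrongNormalizationMonoid (MvPolynomial (Fin d) ℝ) :=
    UniqueFactorizationMonoid.normalizationMonoid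
  letI : NormalizedGCDMonoid (MvPolynomial (Fin d) ℝ) :=
    UniqueFactorizationMonoid.toNormalizedGCDMonoid _
  have halg : Function.Injective (algebraMap (MvPolynomial (Fin d) ℝ) (KK d)) :=
    IsFractionRing.injective _ _
  have hq0 : thB a Q ≠ 0 := by
    intro h
    have := thB_eval_zero a Q
    rw [h] at this
    simp only [Polynomial.eval_zero] at this
    exact hQa (by
      have := this.symm
      rwa [MvPolynomial.C_eq_zero] at this)
  have hr0 : thB a R ≠ 0 := fun h => hR0 (thB_injective a (by rw [h, map_zero]))
  apply isCoprime_of_irreducible_dvd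
  · intro ⟨h1, _⟩
    exact (Polynomial.map_ne_zero_iff halg).mpr hq0 h1
  intro h hirr hdq hdr
  have hne : h ≠ 0 := hirr.ne_zero
  -- integer normalization and its primitive part
  set iN := IsLocalization.integerNormalization
    (nonZeroDivisors (MvPolynomial (Fin d) ℝ)) h with hiN
  obtain ⟨b, hb⟩ := IsLocalization.integerNormalization_map_to_map
    (nonZeroDivisors (MvPolynomial (Fin d) ℝ)) h
  have hiN0 : iN ≠ 0 := fun h0 => hne (IsFractionRing.integerNormalization_eq_zero_iff.mp h0)
  set h₀ := iN.primPart with hh₀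
  have hprim : h₀.IsPrimitive := iN.isPrimitive_primPart
  have hbK : algebraMap (MvPolynomial (Fin d) ℝ) (KK d) (b : MvPolynomial (Fin d) ℝ) ≠ 0 := by
    intro hh
    exact nonZeroDivisors.ne_zero b.2 (halg (by rw [hh, map_zero]))
  have hcK : algebraMap (MvPolynomial (Fin d) ℝ) (KK d) iN.content ≠ 0 := by
    intro hh
    exact (Polynomial.content_eq_zero_iff.not.mpr hiN0) (halg (by rw [hh, map_zero]))
  have hmap_iN : iN.map (algebraMap _ (KK d)) =
      Polynomial.C (algebraMap _ (KK d) iN.content) * h₀.map (algebraMap _ (KK d)) := by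
    conv_lhs => rw [iN.eq_C_content_mul_primPart]
    rw [Polynomial.map_mul, Polynomial.map_C]
  have hsmul : iN.map (algebraMap _ (KK d)) =
      Polynomial.C (algebraMap _ (KK d) (b : MvPolynomial (Fin d) ℝ)) * h := by
    rw [hb, Algebra.smul_def, Polynomial.algebraMap_apply]
  have hassoc : Associated h (h₀.map (algebraMap _ (KK d))) := by
    set bB := algebraMap (MvPolynomial (Fin d) ℝ) (KK d) (b : MvPolynomial (Fin d) ℝ)
    set cB := algebraMap (MvPolynomial (Fin d) ℝ) (KK d) iN.content
    have huC : IsUnit (Polynomial.C (bB / cB) : Polynomial (KK d)) :=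
      Polynomial.isUnit_C.mpr (div_ne_zero hbK hcK).isUnit
    refine ⟨huC.unit, ?_⟩
    rw [IsUnit.unit_spec]
    have hCcne : (Polynomial.C cB : Polynomial (KK d)) ≠ 0 := by
      simpa [Polynomial.C_eq_zero] using hcK
    apply mul_left_cancel₀ hCcne
    have hsc : cB * (bB / cB) = bB := by field_simp
    calc Polynomial.C cB * (h * Polynomial.C (bB / cB))
        = h * (Polynomial.C cB * Polynomial.C (bB / cB)) := by ring
      _ = h * Polynomial.C bB := by rw [← map_mul, hsc]
      _ = Polynomial.C bB * h := by ring
      _ = Polynomial.C cB * Polynomial.map (algebraMap _ (KK d)) h₀ := by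
          rw [← hsmul, hmap_iN]
  -- Gauss transfer: h₀ divides thB a Q and thB a R in B[X]
  have transfer : ∀ F : Polynomial (MvPolynomial (Fin d) ℝ), F ≠ 0 →
      h ∣ F.map (algebraMap _ (KK d)) → h₀ ∣ F := by
    intro F hF0 hdF
    have hcF : algebraMap (MvPolynomial (Fin d) ℝ) (KK d) F.content ≠ 0 := by
      intro hh
      exact (Polynomial.content_eq_zero_iff.not.mpr hF0) (halg (by rw [hh, map_zero]))
    have hdF' : h₀.map (algebraMap _ (KK d)) ∣ F.primPart.map (algebraMap _ (KK d)) := by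
      rw [← hassoc.dvd_iff_dvd_left]
      have hFsplit : F.map (algebraMap _ (KK d)) =
          Polynomial.C (algebraMap _ (KK d) F.content) *
            F.primPart.map (algebraMap _ (KK d)) := by
        conv_lhs => rw [F.eq_C_content_mul_primPart]
        rw [Polynomial.map_mul, Polynomial.map_C]
      obtain ⟨w, hw⟩ := hdF
      refine ⟨Polynomial.C (algebraMap _ (KK d) F.content)⁻¹ * w, ?_⟩
      have hCne : (Polynomial.C (algebraMap _ (KK d) F.content)) ≠ 0 := by
        simpa [Polynomial.C_eq_zero] using hcF
      apply mul_left_cancel₀ hCne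
      rw [← hFsplit, hw]
      rw [show Polynomial.C (algebraMap _ (KK d) F.content) *
        (h * (Polynomial.C (algebraMap _ (KK d) F.content)⁻¹ * w)) =
        h * w * (Polynomial.C (algebraMap _ (KK d) F.content) *
          Polynomial.C (algebraMap _ (KK d) F.content)⁻¹) from by ring]
      rw [← map_mul, mul_inv_cancel₀ hcF, map_one, mul_one]
    have := Polynomial.IsPrimitive.dvd_of_fraction_map_dvd_fraction_map (K := KK d)
      hprim hdF'
    exact this.trans F.primPart_dvd
  have hdvdQ : h₀ ∣ thB a Q := transfer _ hq0 hdq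
  have hdvdR : h₀ ∣ thB a R := transfer _ hr0 hdr
  have hu : IsUnit h₀ := isRelPrime_thB a Q R hQa hcop hdvdQ hdvdR
  have : IsUnit (h₀.map (algebraMap _ (KK d))) :=
    hu.map (Polynomial.mapRingHom (algebraMap _ (KK d)))
  exact hirr.not_isUnit (hassoc.symm.isUnit this)

end NSC

namespace NSC
open Polynomial

variable {d : ℕ}

/-- Evaluation `B[t] → ℝ` at `t := t₀`, `v := v₀`. -/
noncomputable def evA (v₀ : Fin d → ℝ) (t₀ : ℝ) :
    Polynomial (MvPolynomial (Fin d) ℝ) →+* ℝ :=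
  Polynomial.eval₂RingHom (MvPolynomial.eval v₀) t₀

lemma evA_thB (a v₀ : Fin d → ℝ) (t₀ : ℝ) (F : MvPolynomial (Fin d) ℝ) :
    evA v₀ t₀ (thB a F) = MvPolynomial.eval (fun i => a i + t₀ * v₀ i) F := by
  have : (evA v₀ t₀).comp (thB a) =
      (MvPolynomial.eval (fun i => a i + t₀ * v₀ i) :
        MvPolynomial (Fin d) ℝ →+* ℝ) := by
    apply MvPolynomial.ringHom_ext
    · intro s; simp [evA, thB]
    · intro i; simp [evA, thB]; ring
  exact RingHom.congr_fun this F

/-- Bézout certificate: if `Q(a) ≠ 0`, `R ≠ 0` and `Q, R` are coprime, then there is a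
nonzero polynomial `g` in the direction variables such that any real common zero of
`Q, R` on a line through `a` forces `g` to vanish at the direction. -/
lemma exists_certificate (a : Fin d → ℝ) (Q R : MvPolynomial (Fin d) ℝ)
    (hQa : MvPolynomial.eval a Q ≠ 0) (hR0 : R ≠ 0)
    (hcop : ∀ S : MvPolynomial (Fin d) ℝ, S ∣ Q → S ∣ R → IsUnit S) :
    ∃ g : MvPolynomial (Fin d) ℝ, g ≠ 0 ∧
      ∀ (v₀ : Fin d → ℝ) (t₀ : ℝ),
        MvPolynomial.eval (fun i => a i + t₀ * v₀ i) Q = 0 →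
        MvPolynomial.eval (fun i => a i + t₀ * v₀ i) R = 0 →
        MvPolynomial.eval v₀ g = 0 := by
  obtain ⟨S, T, hST⟩ := isCoprime_map_thB a Q R hQa hR0 hcop
  have halg : Function.Injective (algebraMap (MvPolynomial (Fin d) ℝ) (KK d)) :=
    IsFractionRing.injective _ _
  obtain ⟨bS, hbS⟩ := IsLocalization.integerNormalization_map_to_map
    (nonZeroDivisors (MvPolynomial (Fin d) ℝ)) S
  obtain ⟨bT, hbT⟩ := IsLocalization.integerNormalization_map_to_map
    (nonZeroDivisors (MvPolynomial (Fin d) ℝ)) T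
  set S' := IsLocalization.integerNormalization
    (nonZeroDivisors (MvPolynomial (Fin d) ℝ)) S
  set T' := IsLocalization.integerNormalization
    (nonZeroDivisors (MvPolynomial (Fin d) ℝ)) T
  set g := (bS : MvPolynomial (Fin d) ℝ) * (bT : MvPolynomial (Fin d) ℝ) with hg
  have hg0 : g ≠ 0 :=
    mul_ne_zero (nonZeroDivisors.ne_zero bS.2) (nonZeroDivisors.ne_zero bT.2)
  -- identity in B[t]
  have hid : S' * Polynomial.C (bT : MvPolynomial (Fin d) ℝ) * thB a Q +
      T' * Polynomial.C (bS : MvPolynomial (Fin d) ℝ) * thB a R = Polynomial.C g := by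
    apply Polynomial.map_injective (algebraMap (MvPolynomial (Fin d) ℝ) (KK d)) halg
    rw [Polynomial.map_add, Polynomial.map_mul, Polynomial.map_mul, Polynomial.map_mul,
      Polynomial.map_mul, Polynomial.map_C, hbS, hbT]
    have expand : ∀ x : MvPolynomial (Fin d) ℝ, ∀ p : Polynomial (KK d),
        x • p = Polynomial.C (algebraMap (MvPolynomial (Fin d) ℝ) (KK d) x) * p := by
      intro x p
      rw [Algebra.smul_def, Polynomial.algebraMap_apply]
    rw [expand, expand, hg, map_mul, Polynomial.map_C]
    set SK := S
    set qK := (thB a Q).map (algebraMap (MvPolynomial (Fin d) ℝ) (KK d))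
    set rK := (thB a R).map (algebraMap (MvPolynomial (Fin d) ℝ) (KK d))
    set xS := algebraMap (MvPolynomial (Fin d) ℝ) (KK d) (bS : MvPolynomial (Fin d) ℝ)
    set xT := algebraMap (MvPolynomial (Fin d) ℝ) (KK d) (bT : MvPolynomial (Fin d) ℝ)
    calc Polynomial.C xS * S * Polynomial.C xT * qK +
          Polynomial.C xT * T * Polynomial.C xS * rK
        = Polynomial.C xS * Polynomial.C xT * (S * qK + T * rK) := by ring
      _ = Polynomial.C (xS * xT) := by rw [hST, mul_one, map_mul]
      _ = (Polynomial.C (bS : MvPolynomial (Fin d) ℝ) *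
            Polynomial.C (bT : MvPolynomial (Fin d) ℝ)).map
            (algebraMap (MvPolynomial (Fin d) ℝ) (KK d)) := by
          rw [Polynomial.map_mul, Polynomial.map_C, Polynomial.map_C, map_mul]
  refine ⟨g, hg0, ?_⟩
  intro v₀ t₀ hQz hRz
  have := congrArg (evA v₀ t₀) hid
  rw [map_add, map_mul, map_mul, map_mul, map_mul, evA_thB, evA_thB, hQz, hRz] at this
  have hevC : evA v₀ t₀ (Polynomial.C g) = MvPolynomial.eval v₀ g := by
    simp [evA]
  rw [hevC] at this
  simpa using this.symm

end NSC

namespace NSC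
open Polynomial

variable {d : ℕ}

lemma analytic_eval (p : MvPolynomial (Fin d) ℝ) :
    AnalyticOnNhd ℝ (fun x : Fin d → ℝ => MvPolynomial.eval x p) Set.univ := by
  induction p using MvPolynomial.induction_on with
  | C r => simpa using (analyticOnNhd_const (v := r))
  | add p q hp hq =>
    have := hp.add hq
    simpa [Pi.add_def] using this
  | mul_X p i hp =>
    have hproj : AnalyticOnNhd ℝ (fun x : Fin d → ℝ => x i) Set.univ := by
      intro x _
      exact (ContinuousLinearMap.proj (R := ℝ) (φ := fun _ : Fin d => ℝ) i).analyticAt x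
    have := hp.mul hproj
    simpa using this

lemma exists_eval_ne_on_open {G : MvPolynomial (Fin d) ℝ} (hG : G ≠ 0)
    {s : Set (Fin d → ℝ)} (hs : IsOpen s) (hne : s.Nonempty) :
    ∃ x ∈ s, MvPolynomial.eval x G ≠ 0 := by
  by_contra hall
  push_neg at hall
  obtain ⟨z₀, hz₀⟩ := hne
  have hev : (fun x : Fin d → ℝ => MvPolynomial.eval x G) =ᶠ[nhds z₀] 0 := by
    filter_upwards [hs.mem_nhds hz₀] with x hx
    exact hall x hx
  have := (analytic_eval G).eqOn_zero_of_preconnected_of_eventuallyEq_zero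
    isPreconnected_univ (Set.mem_univ z₀) hev
  apply hG
  apply MvPolynomial.funext
  intro x
  have := this (Set.mem_univ x)
  simpa using this

/-- translation substitution `x_i ↦ x_i - a_i`. -/
noncomputable def transMv (a : Fin d → ℝ) :
    MvPolynomial (Fin d) ℝ →+* MvPolynomial (Fin d) ℝ :=
  MvPolynomial.eval₂Hom MvPolynomial.C (fun i => MvPolynomial.X i - MvPolynomial.C (a i))

lemma transMv_injective (a : Fin d → ℝ) : Function.Injective (transMv a) := by
  have hcomp : (MvPolynomial.eval₂Hom (MvPolynomial.C (σ := Fin d) (R := ℝ))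
      (fun i => MvPolynomial.X i + MvPolynomial.C (a i))).comp (transMv a) =
      RingHom.id _ := by
    apply MvPolynomial.ringHom_ext
    · intro s; simp [transMv]
    · intro i; simp [transMv]
  intro x y h
  have h2 := RingHom.congr_fun hcomp x
  have h3 := RingHom.congr_fun hcomp y
  simp only [RingHom.comp_apply, RingHom.id_apply] at h2 h3
  rw [← h2, ← h3, h]

lemma eval_transMv (a x : Fin d → ℝ) (g : MvPolynomial (Fin d) ℝ) :
    MvPolynomial.eval x (transMv a g) = MvPolynomial.eval (fun i => x i - a i) g := by
  have : ((MvPolynomial.eval x : MvPolynomial (Fin d) ℝ →+* ℝ)).comp (transMv a) =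
      (MvPolynomial.eval (fun i => x i - a i) : MvPolynomial (Fin d) ℝ →+* ℝ) := by
    apply MvPolynomial.ringHom_ext
    · intro s; simp [transMv]
    · intro i; simp [transMv]
  exact RingHom.congr_fun this g

end NSC


/-- **Intermediate-value step in Lemma 6.3.** Let `U ⊆ ℝ^d` be open, let `Q, R` be
coprime nonconstant polynomials whose common zero set `Z` has dimension at most `d-2`,
let `U'` be an open ball and `f : U' → ℝ` continuous with `Q(b') = R(b') = 0` whenever
`b' ∈ U'` and `f(b') = 0`. Then there cannot exist `b⁺, b⁻ ∈ U'` with `f(b⁺) > 0`,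
`Q(b⁺) ≠ 0`, `f(b⁻) < 0` and `Q(b⁻) ≠ 0`. -/
theorem no_sign_change_avoiding_common_zeros (d : ℕ) (U : Set (Fin d → ℝ))
    (hUopen : IsOpen U)
    (Q R : MvPolynomial (Fin d) ℝ)
    (hQdeg : 0 < Q.totalDegree) (hRdeg : 0 < R.totalDegree)
    (hcop : ∀ S : MvPolynomial (Fin d) ℝ, S ∣ Q → S ∣ R → IsUnit S)
    (hdim : algSetDim {y : Fin d → ℝ |
        MvPolynomial.eval y Q = 0 ∧ MvPolynomial.eval y R = 0} ≤ ((d - 2 : ℕ) : ℕ∞))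
    (c : Fin d → ℝ) (ρ : ℝ) (U' : Set (Fin d → ℝ)) (hU' : U' = Metric.ball c ρ)
    (f : (Fin d → ℝ) → ℝ) (hf : ContinuousOn f U')
    (hzero : ∀ b' ∈ U', f b' = 0 →
      MvPolynomial.eval b' Q = 0 ∧ MvPolynomial.eval b' R = 0) :
    ¬ ∃ bp bm : Fin d → ℝ, bp ∈ U' ∧ bm ∈ U' ∧
        0 < f bp ∧ MvPolynomial.eval bp Q ≠ 0 ∧
        f bm < 0 ∧ MvPolynomial.eval bm Q ≠ 0 := by
  rintro ⟨bp, bm, hbp, hbm, hfp, hQp, hfm, hQm⟩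
  have hR0 : R ≠ 0 := by
    rintro rfl
    simp [MvPolynomial.totalDegree_zero] at hRdeg
  obtain ⟨g₁, hg₁, hcert₁⟩ := NSC.exists_certificate bp Q R hQp hR0 hcop
  obtain ⟨g₂, hg₂, hcert₂⟩ := NSC.exists_certificate bm Q R hQm hR0 hcop
  have hG1 : NSC.transMv bp g₁ ≠ 0 :=
    fun h => hg₁ (NSC.transMv_injective bp (by rw [h, map_zero]))
  have hG2 : NSC.transMv bm g₂ ≠ 0 :=
    fun h => hg₂ (NSC.transMv_injective bm (by rw [h, map_zero]))
  have hGG : NSC.transMv bp g₁ * NSC.transMv bm g₂ ≠ 0 := mul_ne_zero hG1 hG2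
  have hU'open : IsOpen U' := by rw [hU']; exact Metric.isOpen_ball
  obtain ⟨x, hxU, hxne⟩ := NSC.exists_eval_ne_on_open hGG hU'open ⟨bp, hbp⟩
  rw [map_mul] at hxne
  have hx1 : MvPolynomial.eval (fun i => x i - bp i) g₁ ≠ 0 := by
    rw [← NSC.eval_transMv]; exact fun h => hxne (by rw [h, zero_mul])
  have hx2 : MvPolynomial.eval (fun i => x i - bm i) g₂ ≠ 0 := by
    rw [← NSC.eval_transMv]; exact fun h => hxne (by rw [h, mul_zero])
  set W : Set (Fin d → ℝ) := segment ℝ bp x ∪ segment ℝ x bm with hW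
  have hconv : Convex ℝ U' := by rw [hU']; exact convex_ball c ρ
  have hWU : W ⊆ U' := by
    apply Set.union_subset
    · exact hconv.segment_subset hbp hxU
    · exact hconv.segment_subset hxU hbm
  have hWpre : IsPreconnected W := by
    apply IsPreconnected.union x
    · exact right_mem_segment ℝ bp x
    · exact left_mem_segment ℝ x bm
    · exact (convex_segment bp x).isPreconnected
    · exact (convex_segment x bm).isPreconnected
  have hbpW : bp ∈ W := Set.mem_union_left _ (left_mem_segment ℝ bp x)
  have hbmW : bm ∈ W := Set.mem_union_right _ (right_mem_segment ℝ x bm)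
  have hfW : ContinuousOn f W := hf.mono hWU
  have hIVT := hWpre.intermediate_value hbmW hbpW hfW
  have h0mem : (0 : ℝ) ∈ Set.Icc (f bm) (f bp) := ⟨le_of_lt hfm, le_of_lt hfp⟩
  obtain ⟨z, hzW, hfz⟩ := hIVT h0mem
  have hzU : z ∈ U' := hWU hzW
  obtain ⟨hQz, hRz⟩ := hzero z hzU hfz
  rcases hzW with hzs | hzs
  · rw [segment_eq_image ℝ] at hzs
    obtain ⟨t, _ht, hz⟩ := hzs
    have hzform : (fun i => bp i + t * (x i - bp i)) = z := by
      funext i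
      rw [← hz]
      simp only [Pi.add_apply, Pi.smul_apply, smul_eq_mul]
      ring
    apply hx1
    exact hcert₁ (fun i => x i - bp i) t (by rw [hzform]; exact hQz)
      (by rw [hzform]; exact hRz)
  · rw [segment_symm ℝ x bm, segment_eq_image ℝ] at hzs
    obtain ⟨t, _ht, hz⟩ := hzs
    have hzform : (fun i => bm i + t * (x i - bm i)) = z := by
      funext i
      rw [← hz]
      simp only [Pi.add_apply, Pi.smul_apply, smul_eq_mul]
      ring
    apply hx2
    exact hcert₂ (fun i => x i - bm i) t (by rw [hzform]; exact hQz)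
      (by rw [hzform]; exact hRz)
end
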